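/- arXiv:1204.5203 — 8 statements merged into one kernel-verified Lean document; each statement's English description precedes it below -/
import Mathlib

section
/- A function f : 𝔽₂ⁿ → 𝔽₂ is ⟨i:a:b⟩ canalizing if and only if there exists a function Q of the n−1 variables x₁,…,x_{i−1},x_{i+1},…,xₙ (i.e., a function 𝔽₂^{n−1} → 𝔽₂ not depending on x_i) such that f(x₁,…,xₙ) = (x_i ⊕ a)·Q(x₁,…,x_{i−1},x_{i+1},…,xₙ) ⊕ b, with multiplication and ⊕ taken in 𝔽₂. -/
/-- `f` is `⟨i:a:b⟩` canalizing: whenever `xᵢ = a`, `f` outputs `b`,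
regardless of the other variables. -/
def IsCanalizing {n : ℕ} (f : (Fin n → ZMod 2) → ZMod 2) (i : Fin n)
    (a b : ZMod 2) : Prop :=
  ∀ x : Fin n → ZMod 2, f (Function.update x i a) = b

lemma two_self {z : ZMod 2} : z + z = 0 := by
  revert z; decide

lemma two_cases (z : ZMod 2) : z = 0 ∨ z = 1 := by
  revert z; decide

/-- `f` is `⟨i:a:b⟩` canalizing iff `f(x) = (xᵢ ⊕ a)·Q(x) ⊕ b` for some
function `Q` not depending on the variable `xᵢ`. -/
theorem statement1 {n : ℕ} (f : (Fin n → ZMod 2) → ZMod 2) (i : Fin n)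
    (a b : ZMod 2) :
    IsCanalizing f i a b ↔
      ∃ Q : (Fin n → ZMod 2) → ZMod 2,
        (∀ (x : Fin n → ZMod 2) (c : ZMod 2), Q (Function.update x i c) = Q x) ∧
        ∀ x : Fin n → ZMod 2, f x = (x i + a) * Q x + b := by
  constructor
  · intro h
    refine ⟨fun x => f (Function.update x i (a + 1)) + b, ?_, ?_⟩
    · intro x c
      simp only [Function.update_idem]
    · intro x
      simp only
      rcases two_cases (x i + a) with h1 | h1
      · have hxa : x i = a := by linear_combination h1 - two_self (z := a)
        have hu : Function.update x i a = x := by rw [← hxa, Function.update_eq_self]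
        have hb := h x
        rw [hu] at hb
        rw [hb, h1, zero_mul, zero_add]
      · have hxa : x i = a + 1 := by linear_combination h1 - two_self (z := a)
        have hu : Function.update x i (a + 1) = x := by
          rw [← hxa, Function.update_eq_self]
        rw [hu, h1, one_mul]
        linear_combination - two_self (z := b)
  · rintro ⟨Q, hQ, hf⟩ x
    rw [hf (Function.update x i a), Function.update_self, two_self, zero_mul, zero_add]
end

section
/- Let f : 𝔽₂ⁿ → 𝔽₂ be a nested canalizing function (so every variable of f is essential). Then every variable of f is a most dominant variable if and only if f(x₁,…,xₙ) = (x₁⊕a₁)(x₂⊕a₂)⋯(xₙ⊕aₙ) ⊕ b for some a₁,…,aₙ, b ∈ 𝔽₂, i.e., f is an extended monomial in all n variables plus a constant. -/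
/-- `f` is nested canalizing in the variable order `σ(0), σ(1), …, σ(n-1)`
with canalizing input values `a` and canalized output values `b`:
`f x = b k` whenever `x (σ j) = a j + 1` for all `j < k` and `x (σ k) = a k`,
and `f x = b (last) + 1` whenever `x (σ j) = a j + 1` for all `j`. -/
def IsNCF {n : ℕ} (f : (Fin n → ZMod 2) → ZMod 2) (σ : Equiv.Perm (Fin n))
    (a b : Fin n → ZMod 2) : Prop :=
  (∀ (k : Fin n) (x : Fin n → ZMod 2),
      (∀ j : Fin n, j < k → x (σ j) = a j + 1) → x (σ k) = a k → f x = b k) ∧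
  (∀ k : Fin n, (∀ j : Fin n, j ≤ k) →
      ∀ x : Fin n → ZMod 2, (∀ j : Fin n, x (σ j) = a j + 1) → f x = b k + 1)

lemma zmod2_ne_iff {u v : ZMod 2} (h : u ≠ v) : u = v + 1 := by
  revert h; revert u v; decide

lemma zmod2_add_one_ne (u : ZMod 2) : u + 1 ≠ u := by revert u; decide

lemma zmod2_self_add (u : ZMod 2) : u + u = 0 := by revert u; decide

lemma zmod2_flip_add (u : ZMod 2) : u + 1 + u = 1 := by revert u; decide

/-- For a nested canalizing function `f`, every variable is most dominant
(i.e. for every `i` there is a variable order starting with `xᵢ` in which `f`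
is nested canalizing) iff `f(x) = (x₁⊕a₁)⋯(xₙ⊕aₙ) ⊕ b`, i.e. `f` is an
extended monomial in all `n` variables plus a constant. -/
theorem statement3 {n : ℕ} (hn : 0 < n) (f : (Fin n → ZMod 2) → ZMod 2)
    (hf : ∃ (σ : Equiv.Perm (Fin n)) (a b : Fin n → ZMod 2), IsNCF f σ a b) :
    (∀ i : Fin n, ∃ (σ : Equiv.Perm (Fin n)) (a b : Fin n → ZMod 2),
        σ ⟨0, hn⟩ = i ∧ IsNCF f σ a b) ↔
      ∃ (a : Fin n → ZMod 2) (b : ZMod 2),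
        ∀ x : Fin n → ZMod 2, f x = (∏ j : Fin n, (x j + a j)) + b := by
  obtain ⟨σ₀, a₀, b₀, h₁, h₂⟩ := hf
  set k₀ : Fin n := ⟨0, hn⟩ with hk₀
  set kL : Fin n := ⟨n - 1, by omega⟩ with hkL
  have hle : ∀ j : Fin n, j ≤ kL := fun j => by
    have := j.isLt
    exact Fin.le_def.mpr (by simp [hkL]; omega)
  -- two points where f differs
  have hy : f (fun t => a₀ (σ₀.symm t) + 1) = b₀ kL + 1 := by
    apply h₂ kL hle
    intro j; simp
  have hz : f (fun t => if t = σ₀ kL then a₀ kL else a₀ (σ₀.symm t) + 1) = b₀ kL := by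
    apply h₁ kL
    · intro j hj
      have hne : σ₀ j ≠ σ₀ kL := fun h => (ne_of_lt hj) (σ₀.injective h)
      simp [hne]
    · simp
  constructor
  · intro h
    choose σs as bs hσ hN using h
    set c : Fin n → ZMod 2 := fun i => as i k₀ with hc
    set d : Fin n → ZMod 2 := fun i => bs i k₀ with hd
    have hP : ∀ i x, x i = c i → f x = d i := by
      intro i x hx
      refine (hN i).1 k₀ x (fun j hj => absurd (Fin.lt_def.mp hj) (Nat.not_lt_zero _)) ?_
      rw [hσ i]; exact hx
    have hD : ∀ i, d i = d k₀ := by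
      intro i
      set x : Fin n → ZMod 2 := fun t => if t = i then c i else c k₀ with hxdef
      have hx1 : x i = c i := by simp [hxdef]
      have hx0 : x k₀ = c k₀ := by
        by_cases h' : k₀ = i
        · subst h'; simp [hxdef]
        · simp [hxdef, h']
      rw [← hP i x hx1, hP k₀ x hx0]
    refine ⟨c, d k₀, fun x => ?_⟩
    by_cases hcase : ∃ i, x i = c i
    · obtain ⟨i, hi⟩ := hcase
      have hprod : (∏ j : Fin n, (x j + c j)) = 0 :=
        Finset.prod_eq_zero (Finset.mem_univ i) (by rw [hi]; exact zmod2_self_add _)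
      rw [hprod, zero_add, hP i x hi, hD i]
    · push_neg at hcase
      have hflip : ∀ i, x i = c i + 1 := fun i => zmod2_ne_iff (hcase i)
      have hprod : (∏ j : Fin n, (x j + c j)) = 1 :=
        Finset.prod_eq_one (fun j _ => by rw [hflip j]; exact zmod2_flip_add _)
      rw [hprod]
      -- f is nonconstant, so there is w with f w ≠ d k₀
      have hm : ∃ w, f w ≠ d k₀ := by
        by_cases hw : f (fun t => a₀ (σ₀.symm t) + 1) = d k₀
        · refine ⟨fun t => if t = σ₀ kL then a₀ kL else a₀ (σ₀.symm t) + 1, ?_⟩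
          rw [hz]
          intro h'
          rw [hy, h'] at hw
          exact zmod2_add_one_ne _ hw
        · exact ⟨_, hw⟩
      obtain ⟨w, hw⟩ := hm
      have hwt : ∀ t, w t ≠ c t := fun t ht => hw (by rw [hP t w ht, hD t])
      have hwx : x = w := by
        funext t
        rw [hflip t, zmod2_ne_iff (hwt t)]
      rw [hwx, zmod2_ne_iff hw, add_comm]
  · rintro ⟨a, b, hab⟩ i
    set τ : Equiv.Perm (Fin n) := Equiv.swap k₀ i with hτ
    refine ⟨τ, fun j => a (τ j), fun _ => b, Equiv.swap_apply_left _ _, ?_, ?_⟩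
    · intro k x _ hk
      rw [hab x]
      have hprod : (∏ j : Fin n, (x j + a j)) = 0 :=
        Finset.prod_eq_zero (Finset.mem_univ (τ k)) (by rw [hk]; exact zmod2_self_add _)
      rw [hprod, zero_add]
    · intro k _ x hx
      rw [hab x]
      have hprod : (∏ j : Fin n, (x j + a j)) = 1 := by
        refine Finset.prod_eq_one (fun j _ => ?_)
        have h' : x j = a j + 1 := by simpa using hx (τ.symm j)
        rw [h']
        exact zmod2_flip_add _
      rw [hprod]
      exact add_comm 1 b
end

section
/- Let n ≥ 2 and let f : 𝔽₂ⁿ → 𝔽₂ be given in the layered form f = M₁(M₂(⋯(M_{r−1}(M_r ⊕ 1) ⊕ 1)⋯) ⊕ 1) ⊕ b, where each M_i is an extended monomial in k_i variables, the variable sets of the M_i are pairwise disjoint and together comprise all n variables, k_i ≥ 1 for i = 1,…,r−1, k_r ≥ 2, and k₁ + ⋯ + k_r = n. Then f is nested canalizing. -/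
/-- The nested expression `M i * (M (i+1) * ( … * (M (i+t-1) + 1) … ) + 1)`
with `t` factors, i.e. `nestVal M t i = Mᵢ(M_{i+1}(⋯(M_{i+t-1} ⊕ 1)⋯) ⊕ 1)`. -/
def nestVal (M : ℕ → ZMod 2) : ℕ → ℕ → ZMod 2
  | 0, _ => 0
  | 1, i => M i
  | (t + 2), i => M i * (nestVal M (t + 1) (i + 1) + 1)

/-- The extended monomial of the `i`-th layer, given the layer assignment `L`
and the complemented inputs `a`:  `Mᵢ(x) = ∏_{L j = i} (x j ⊕ a j)`. -/
def layerMon {n r : ℕ} (L : Fin n → Fin r) (a : Fin n → ZMod 2) (i : ℕ)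
    (x : Fin n → ZMod 2) : ZMod 2 :=
  ∏ j ∈ Finset.univ.filter (fun j : Fin n => (L j : ℕ) = i), (x j + a j)

/-- `kᵢ`, the number of variables in the `i`-th layer. -/
def layerSize {n r : ℕ} (L : Fin n → Fin r) (i : ℕ) : ℕ :=
  (Finset.univ.filter (fun j : Fin n => (L j : ℕ) = i)).card

/-- `K_l = k₀ + k₁ + ⋯ + k_{l-1}`, the number of variables in the first `l` layers. -/
def layerSum {n r : ℕ} (L : Fin n → Fin r) (l : ℕ) : ℕ :=
  ∑ i ∈ Finset.range l, layerSize L i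

/-- `f` is given in the layered form
`f = M₁(M₂(⋯(M_{r−1}(M_r ⊕ 1) ⊕ 1)⋯) ⊕ 1) ⊕ b`, where the `Mᵢ` are extended
monomials in pairwise disjoint sets of variables comprising all `n` variables
(the variable set of `Mᵢ` being the `i`-th layer `{j | L j = i}`), every layer
is nonempty, and the last layer has at least two variables. -/
def IsLayeredForm {n r : ℕ} (f : (Fin n → ZMod 2) → ZMod 2)
    (L : Fin n → Fin r) (a : Fin n → ZMod 2) (b : ZMod 2) : Prop :=
  1 ≤ r ∧
  (∀ i : Fin r, 1 ≤ layerSize L (i : ℕ)) ∧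
  2 ≤ layerSize L (r - 1) ∧
  ∀ x : Fin n → ZMod 2, f x = nestVal (fun i => layerMon L a i x) r 0 + b
lemma nestVal_eq_of_zero (M : ℕ → ZMod 2) :
    ∀ s t i, s < t → (∀ j, j < s → M (i + j) = 1) → M (i + s) = 0 →
      nestVal M t i = (s : ZMod 2) := by
  intro s
  induction s with
  | zero =>
    intro t i ht _ h0
    simp only [Nat.add_zero] at h0
    rcases t with _ | _ | t'
    · omega
    · simpa [nestVal] using h0
    · simp [nestVal, h0]
  | succ s ih =>
    intro t i ht h1 h0
    obtain ⟨t', rfl⟩ : ∃ t', t = t' + 2 := ⟨t - 2, by omega⟩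
    have hMi : M i = 1 := by simpa using h1 0 (Nat.succ_pos s)
    have hrec := ih (t' + 1) (i + 1) (by omega)
      (fun j hj => by
        have := h1 (j + 1) (by omega)
        simpa [Nat.add_assoc, Nat.add_comm 1 j] using this)
      (by simpa [Nat.add_assoc, Nat.add_comm 1 s] using h0)
    simp only [nestVal, hMi, hrec, one_mul]
    push_cast
    ring

lemma nestVal_eq_of_one (M : ℕ → ZMod 2) (t : ℕ) :
    ∀ i, (∀ j, j < t → M (i + j) = 1) → nestVal M t i = (t : ZMod 2) := by
  induction t using Nat.strong_induction_on with
  | _ t ih =>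
    match t with
    | 0 => intro i _; simp [nestVal]
    | 1 => intro i h; simpa [nestVal] using h 0 one_pos
    | (t + 2) =>
      intro i h
      have h1 : M i = 1 := by simpa using h 0 (by omega)
      have hrec := ih (t + 1) (by omega) (i + 1) (fun j hj => by
        have := h (j + 1) (by omega)
        simpa [Nat.add_assoc, Nat.add_comm 1 j] using this)
      simp only [nestVal, h1, hrec, one_mul]
      push_cast
      ring

/-- Every function in the layered form
`f = M₁(M₂(⋯(M_{r−1}(M_r ⊕ 1) ⊕ 1)⋯) ⊕ 1) ⊕ b` (n ≥ 2) is nested canalizing. -/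
theorem statement5 {n r : ℕ} (hn : 2 ≤ n) (f : (Fin n → ZMod 2) → ZMod 2)
    (L : Fin n → Fin r) (a : Fin n → ZMod 2) (b : ZMod 2)
    (h : IsLayeredForm f L a b) :
    ∃ (σ : Equiv.Perm (Fin n)) (α β : Fin n → ZMod 2), IsNCF f σ α β := by
  obtain ⟨hr, hsize, hlast, hf⟩ := h
  set σ : Equiv.Perm (Fin n) := Tuple.sort L with hσ
  have hmono : Monotone (L ∘ σ) := Tuple.monotone_sort L
  refine ⟨σ, fun j => a (σ j), fun j => b + ((L (σ j) : ℕ) : ZMod 2), ?_, ?_⟩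
  · -- first condition
    intro k x hlt hk
    set i : ℕ := (L (σ k) : ℕ) with hi
    set Mx : ℕ → ZMod 2 := fun i' => layerMon L a i' x with hMx
    have hones : ∀ i', i' < i → Mx i' = 1 := by
      intro i' hi'
      apply Finset.prod_eq_one
      intro j hj
      have hLj : (L j : ℕ) = i' := (Finset.mem_filter.mp hj).2
      have hjk : σ.symm j < k := by
        by_contra hc
        push_neg at hc
        have := hmono hc
        simp only [Function.comp_apply, Equiv.apply_symm_apply] at this
        have : (L (σ k) : ℕ) ≤ (L j : ℕ) := this
        omega
      have hxj : x j = a j + 1 := by simpa using hlt (σ.symm j) hjk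
      rw [hxj, add_comm (a j) 1, add_assoc, CharTwo.add_self_eq_zero, add_zero]
    have hzero : Mx i = 0 := by
      apply Finset.prod_eq_zero (i := σ k)
      · simp [Finset.mem_filter, hi]
      · rw [hk, CharTwo.add_self_eq_zero]
    have hnest : nestVal Mx r 0 = (i : ZMod 2) := by
      apply nestVal_eq_of_zero Mx i r 0 (Fin.is_lt _)
      · intro j hj; simpa using hones j hj
      · simpa using hzero
    rw [hf x, hnest, add_comm]
  · -- second condition
    intro k hk x hx
    set Mx : ℕ → ZMod 2 := fun i' => layerMon L a i' x with hMx
    have hones : ∀ i', Mx i' = 1 := by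
      intro i'
      apply Finset.prod_eq_one
      intro j _
      have hxj : x j = a j + 1 := by simpa using hx (σ.symm j)
      rw [hxj, add_comm (a j) 1, add_assoc, CharTwo.add_self_eq_zero, add_zero]
    have hnest : nestVal Mx r 0 = (r : ZMod 2) :=
      nestVal_eq_of_one Mx r 0 (fun j _ => hones _)
    -- L (σ k) = r - 1
    have hex : ∃ j0 : Fin n, (L j0 : ℕ) = r - 1 := by
      have hcard : 0 < layerSize L (r - 1) := by omega
      rw [layerSize, Finset.card_pos] at hcard
      obtain ⟨j0, hj0⟩ := hcard
      exact ⟨j0, (Finset.mem_filter.mp hj0).2⟩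
    obtain ⟨j0, hj0⟩ := hex
    have hle : (L (σ (σ.symm j0)) : ℕ) ≤ (L (σ k) : ℕ) := hmono (hk (σ.symm j0))
    rw [Equiv.apply_symm_apply] at hle
    have hkv : (L (σ k) : ℕ) = r - 1 := by
      have := (L (σ k)).is_lt
      omega
    rw [hf x, hnest]
    show (r : ZMod 2) + b = b + ((L (σ k) : ℕ) : ZMod 2) + 1
    rw [hkv]
    have hcast : ((r - 1 : ℕ) : ZMod 2) + 1 = (r : ZMod 2) := by
      have hr1 : r - 1 + 1 = r := by omega
      rw [← hr1]
      push_cast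
      ring
    rw [add_assoc, hcast, add_comm]
end

section
/- Let n ≥ 2. The layered-form representation of a nested canalizing function is unique: if M₁(M₂(⋯(M_{r−1}(M_r ⊕ 1) ⊕ 1)⋯) ⊕ 1) ⊕ b and M'₁(M'₂(⋯(M'_{r'−1}(M'_{r'} ⊕ 1) ⊕ 1)⋯) ⊕ 1) ⊕ b' are two layered-form representations (each with pairwise disjoint extended monomials covering all n variables, layer sizes ≥ 1 except the last layer of size ≥ 2) defining the same function f : 𝔽₂ⁿ → 𝔽₂, then r = r', b = b', and M_i = M'_i for all i = 1,…,r. -/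
-- ZMod 2 toolbox
lemma z2_cases : ∀ u : ZMod 2, u = 0 ∨ u = 1 := by decide
lemma z2_add_one_ne : ∀ u : ZMod 2, u + 1 ≠ u := by decide
lemma z2_eq_or : ∀ u v : ZMod 2, u = v ∨ u = v + 1 := by decide
lemma z2_cancel : ∀ u v : ZMod 2, u + 1 = v + 1 → u = v := by decide
lemma z2_uu1 : ∀ u : ZMod 2, u + 1 + u = 1 := by decide
lemma z2_uu : ∀ u : ZMod 2, u + u = 0 := by decide

lemma nestVal_succ (M : ℕ → ZMod 2) (t i : ℕ) :
    nestVal M (t + 1) i = M i * (nestVal M t (i + 1) + 1) := by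
  cases t with
  | zero => show M i = M i * (0 + 1); ring
  | succ u => rfl

lemma nestVal_ext {f g : ℕ → ZMod 2} (t : ℕ) :
    ∀ s, (∀ i, s ≤ i → i < s + t → f i = g i) → nestVal f t s = nestVal g t s := by
  induction t with
  | zero => intro s _; rfl
  | succ u IH =>
      intro s h
      rw [nestVal_succ, nestVal_succ, h s (le_refl s) (by omega),
        IH (s + 1) (fun i h1 h2 => h i (by omega) (by omega))]

section
variable {n r : ℕ}

lemma layerMon_eq_one {L : Fin n → Fin r} {a : Fin n → ZMod 2} {i : ℕ}
    {x : Fin n → ZMod 2} (h : ∀ m, (L m : ℕ) = i → x m = a m + 1) :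
    layerMon L a i x = 1 :=
  Finset.prod_eq_one (fun m hm => by
    rw [h m (Finset.mem_filter.mp hm).2]; exact z2_uu1 (a m))

lemma layerMon_eq_zero {L : Fin n → Fin r} {a : Fin n → ZMod 2} {i : ℕ}
    {x : Fin n → ZMod 2} {m : Fin n}
    (hm : (L m : ℕ) = i) (hx : x m = a m) : layerMon L a i x = 0 :=
  Finset.prod_eq_zero (Finset.mem_filter.mpr ⟨Finset.mem_univ m, hm⟩)
    (by rw [hx]; exact z2_uu (a m))

lemma layerMon_factor {L : Fin n → Fin r} {a : Fin n → ZMod 2} {i : ℕ}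
    {x : Fin n → ZMod 2} {m : Fin n}
    (h : layerMon L a i x = 1) (hm : (L m : ℕ) = i) : x m = a m + 1 := by
  rcases z2_eq_or (x m) (a m) with hx | hx
  · rw [layerMon_eq_zero hm hx] at h; exact absurd h (by decide)
  · exact hx

lemma layerMon_congr {L : Fin n → Fin r} {a : Fin n → ZMod 2} {i : ℕ}
    {x y : Fin n → ZMod 2}
    (h : ∀ m, (L m : ℕ) = i → x m = y m) : layerMon L a i x = layerMon L a i y :=
  Finset.prod_congr rfl (fun m hm => by rw [h m (Finset.mem_filter.mp hm).2])

lemma layerMon_of_ge {L : Fin n → Fin r} {a : Fin n → ZMod 2} {i : ℕ}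
    (h : r ≤ i) (x : Fin n → ZMod 2) : layerMon L a i x = 1 := by
  unfold layerMon
  rw [Finset.filter_false_of_mem (fun m _ => by have := (L m).isLt; omega),
    Finset.prod_empty]

def NV (L : Fin n → Fin r) (a : Fin n → ZMod 2) (t s : ℕ)
    (x : Fin n → ZMod 2) : ZMod 2 :=
  nestVal (fun i => layerMon L a i x) t s

lemma NV_succ (L : Fin n → Fin r) (a : Fin n → ZMod 2) (t s : ℕ)
    (x : Fin n → ZMod 2) :
    NV L a (t + 1) s x = layerMon L a s x * (NV L a t (s + 1) x + 1) :=
  nestVal_succ _ _ _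

lemma NV_zero (L : Fin n → Fin r) (a : Fin n → ZMod 2) (s : ℕ)
    (x : Fin n → ZMod 2) : NV L a 0 s x = 0 := rfl

lemma NV_congr {L : Fin n → Fin r} {a : Fin n → ZMod 2} {t s : ℕ}
    {x y : Fin n → ZMod 2}
    (h : ∀ m, s ≤ (L m : ℕ) → x m = y m) : NV L a t s x = NV L a t s y :=
  nestVal_ext t s (fun i h1 _ => layerMon_congr (fun m hm => h m (by omega)))


lemma exists_NV_one {L : Fin n → Fin r} (a : Fin n → ZMod 2) {t s : ℕ}
    (hs : s + t = r) (ht : 1 ≤ t) (hne : ∀ i, i < r → ∃ m, (L m : ℕ) = i) :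
    ∃ x, NV L a t s x = 1 := by
  obtain ⟨u, rfl⟩ : ∃ u, t = u + 1 := ⟨t - 1, by omega⟩
  cases u with
  | zero =>
      refine ⟨fun p => a p + 1, ?_⟩
      rw [NV_succ, layerMon_eq_one (fun m _ => rfl)]
      exact show (1 : ZMod 2) * (0 + 1) = 1 by decide
  | succ w =>
      obtain ⟨m, hm⟩ := hne (s + 1) (by omega)
      refine ⟨fun p => if p = m then a m else a p + 1, ?_⟩
      rw [NV_succ, NV_succ,
        layerMon_eq_zero (x := fun p => if p = m then a m else a p + 1) hm (if_pos rfl),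
        layerMon_eq_one (fun p hp => if_neg (by rintro rfl; omega))]
      ring_nf

lemma exists_NV_zero {L : Fin n → Fin r} (a : Fin n → ZMod 2) {t s : ℕ}
    (hs : s + t = r) (hne : ∀ i, i < r → ∃ m, (L m : ℕ) = i)
    (hlast : 2 ≤ layerSize L (r - 1)) (j : Fin n) (v : ZMod 2) :
    ∃ x, x j = v ∧ NV L a t s x = 0 := by
  cases t with
  | zero => exact ⟨fun _ => v, rfl, rfl⟩
  | succ u =>
    by_cases hj : (L j : ℕ) = s
    · rcases z2_eq_or v (a j) with hv | hv
      · refine ⟨fun p => if p = j then v else 0, if_pos rfl, ?_⟩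
        rw [NV_succ, layerMon_eq_zero hj (by simpa using hv), zero_mul]
      · cases u with
        | zero =>
          have hcard : 1 < (Finset.univ.filter (fun m : Fin n => (L m : ℕ) = s)).card := by
            have h2 : 2 ≤ layerSize L s := by
              have : s = r - 1 := by omega
              rw [this]; exact hlast
            exact h2
          obtain ⟨m, hm, hmj⟩ := Finset.exists_mem_ne hcard j
          have hLm : (L m : ℕ) = s := (Finset.mem_filter.mp hm).2
          refine ⟨fun p => if p = m then a m else v,
            if_neg (fun h => hmj h.symm), ?_⟩
          rw [NV_succ, layerMon_eq_zero hLm (if_pos rfl), zero_mul]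
        | succ w =>
          obtain ⟨x₁, hx₁⟩ := exists_NV_one a (s := s + 1) (t := w + 1) (by omega) (by omega) hne
          refine ⟨fun p => if p = j then v else x₁ p, if_pos rfl, ?_⟩
          rw [NV_succ]
          have hinner : NV L a (w + 1) (s + 1) (fun p => if p = j then v else x₁ p) = 1 := by
            rw [NV_congr (y := x₁) (fun m hmge => if_neg (by rintro rfl; omega))]
            exact hx₁
          rw [hinner]
          have h11 : (1 : ZMod 2) + 1 = 0 := by decide
          rw [h11, mul_zero]
    · obtain ⟨m, hLm⟩ := hne s (by omega)
      have hjm : j ≠ m := by rintro rfl; exact hj hLm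
      refine ⟨fun p => if p = m then a m else v, if_neg hjm, ?_⟩
      rw [NV_succ, layerMon_eq_zero hLm (if_pos rfl), zero_mul]

lemma exists_NV_one_coord {L : Fin n → Fin r} (a : Fin n → ZMod 2) {t s : ℕ}
    (hs : s + t = r) (ht : 1 ≤ t) (hne : ∀ i, i < r → ∃ m, (L m : ℕ) = i)
    (hlast : 2 ≤ layerSize L (r - 1)) {j : Fin n} (hj : (L j : ℕ) ≠ s)
    (v : ZMod 2) :
    ∃ x, x j = v ∧ NV L a t s x = 1 := by
  obtain ⟨u, rfl⟩ : ∃ u, t = u + 1 := ⟨t - 1, by omega⟩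
  cases u with
  | zero =>
    refine ⟨fun p => if p = j then v else a p + 1, if_pos rfl, ?_⟩
    rw [NV_succ, layerMon_eq_one (fun m hm => if_neg (by rintro rfl; exact hj hm))]
    exact show (1 : ZMod 2) * (0 + 1) = 1 by decide
  | succ w =>
    obtain ⟨x₁, hx₁v, hx₁⟩ := exists_NV_zero a (s := s + 1) (t := w + 1) (by omega) hne hlast j v
    refine ⟨fun p => if (L p : ℕ) = s then a p + 1 else x₁ p,
      (if_neg hj).trans hx₁v, ?_⟩
    rw [NV_succ, layerMon_eq_one (fun m hm => if_pos hm)]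
    have hinner : NV L a (w + 1) (s + 1)
        (fun p => if (L p : ℕ) = s then a p + 1 else x₁ p) = 0 := by
      rw [NV_congr (y := x₁) (fun m hmge => if_neg (by omega))]
      exact hx₁
    rw [hinner]
    exact show (1 : ZMod 2) * (0 + 1) = 1 by decide

lemma NV_one_factor {L : Fin n → Fin r} {a : Fin n → ZMod 2} {t s : ℕ}
    (ht : 1 ≤ t) {x : Fin n → ZMod 2} (hx : NV L a t s x = 1)
    {j : Fin n} (hj : (L j : ℕ) = s) : x j = a j + 1 := by
  obtain ⟨u, rfl⟩ : ∃ u, t = u + 1 := ⟨t - 1, by omega⟩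
  rw [NV_succ] at hx
  rcases z2_cases (layerMon L a s x) with h0 | h1
  · rw [h0, zero_mul] at hx; exact absurd hx (by decide)
  · exact layerMon_factor h1 hj

lemma main_unique {n r r' : ℕ} {L : Fin n → Fin r} {a : Fin n → ZMod 2}
    {L' : Fin n → Fin r'} {a' : Fin n → ZMod 2}
    (hne : ∀ i, i < r → ∃ m, (L m : ℕ) = i) (hlast : 2 ≤ layerSize L (r - 1))
    (hne' : ∀ i, i < r' → ∃ m, (L' m : ℕ) = i) (hlast' : 2 ≤ layerSize L' (r' - 1))
    (t : ℕ) :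
    ∀ t' s s' : ℕ, s + t = r → s' + t' = r' → 1 ≤ t → 1 ≤ t' →
    (∀ j : Fin n, ((L j : ℕ) < s ↔ (L' j : ℕ) < s')) →
    (∀ x, NV L a t s x = NV L' a' t' s' x) →
    t = t' ∧ ∀ i : ℕ, layerMon L a (s + i) = layerMon L' a' (s' + i) := by
  induction t with
  | zero => intro t' s s' _ _ ht _ _ _; omega
  | succ u IH =>
    intro t' s s' hs hs' _ ht' hiff heq
    obtain ⟨u', rfl⟩ : ∃ u', t' = u' + 1 := ⟨t' - 1, by omega⟩
    -- the first layers coincide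
    have hfirst : ∀ j : Fin n, ((L j : ℕ) = s ↔ (L' j : ℕ) = s') := by
      intro j
      constructor
      · intro hj
        by_contra hj'
        obtain ⟨x, hxj, hx1⟩ := exists_NV_one_coord a' (s := s') (t := u' + 1)
          hs' (by omega) hne' hlast' hj' (a j)
        have hfac := NV_one_factor (t := u + 1) (by omega)
          (by rw [heq x]; exact hx1) hj
        rw [hxj] at hfac
        exact z2_add_one_ne (a j) hfac.symm
      · intro hj
        by_contra hj'
        obtain ⟨x, hxj, hx1⟩ := exists_NV_one_coord a (s := s) (t := u + 1)
          hs (by omega) hne hlast hj' (a' j)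
        have hfac := NV_one_factor (t := u' + 1) (by omega)
          (by rw [← heq x]; exact hx1) hj
        rw [hxj] at hfac
        exact z2_add_one_ne (a' j) hfac.symm
    -- common support point, agreement of a, equality of first monomials
    obtain ⟨x₀, hx₀⟩ := exists_NV_one a hs (by omega) hne
    have hx₀' : NV L' a' (u' + 1) s' x₀ = 1 := by rw [← heq x₀]; exact hx₀
    have haa : ∀ j : Fin n, (L j : ℕ) = s → a j = a' j := by
      intro j hj
      have h1 := NV_one_factor (t := u + 1) (by omega) hx₀ hj
      have h2 := NV_one_factor (t := u' + 1) (by omega) hx₀' ((hfirst j).mp hj)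
      exact z2_cancel _ _ (h1.symm.trans h2)
    have hmon : layerMon L a s = layerMon L' a' s' := by
      funext x
      unfold layerMon
      rw [show Finset.univ.filter (fun m : Fin n => (L' m : ℕ) = s')
          = Finset.univ.filter (fun m : Fin n => (L m : ℕ) = s) from by
        ext m; simp [Finset.mem_filter, hfirst m]]
      refine Finset.prod_congr rfl (fun m hm => ?_)
      rw [haa m (Finset.mem_filter.mp hm).2]
    cases u with
    | zero =>
      have hu' : u' = 0 := by
        by_contra hu'
        obtain ⟨x₁, hx₁⟩ := exists_NV_one a' (s := s' + 1) (t := u') (by omega) (by omega) hne'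
        have hM' : layerMon L' a' s' (fun p => if (L' p : ℕ) = s' then a' p + 1 else x₁ p) = 1 :=
          layerMon_eq_one (fun m hm => if_pos hm)
        have hinner : NV L' a' u' (s' + 1)
            (fun p => if (L' p : ℕ) = s' then a' p + 1 else x₁ p) = 1 := by
          rw [NV_congr (y := x₁) (fun m hmge => if_neg (by omega))]
          exact hx₁
        -- t' side is 0, t side is 1
        obtain ⟨w', rfl⟩ : ∃ w', u' = w' + 1 := ⟨u' - 1, by omega⟩
        have hN' : NV L' a' (w' + 1 + 1) s'
            (fun p => if (L' p : ℕ) = s' then a' p + 1 else x₁ p) = 0 := by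
          rw [NV_succ, hM', hinner, one_mul]
          decide
        have hN : NV L a (0 + 1) s
            (fun p => if (L' p : ℕ) = s' then a' p + 1 else x₁ p) = 1 := by
          rw [NV_succ, hmon, hM']
          exact show (1 : ZMod 2) * (0 + 1) = 1 by decide
        have hcontra := heq (fun p => if (L' p : ℕ) = s' then a' p + 1 else x₁ p)
        rw [hN, hN'] at hcontra
        exact absurd hcontra (by decide)
      subst hu'
      refine ⟨rfl, fun i => ?_⟩
      cases i with
      | zero => simpa using hmon
      | succ w2 =>
        funext x
        rw [layerMon_of_ge (by omega), layerMon_of_ge (by omega)]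
    | succ w =>
      have hu' : u' ≠ 0 := by
        rintro rfl
        obtain ⟨x₁, hx₁⟩ := exists_NV_one a (s := s + 1) (t := w + 1) (by omega) (by omega) hne
        have hM : layerMon L a s (fun p => if (L p : ℕ) = s then a p + 1 else x₁ p) = 1 :=
          layerMon_eq_one (fun m hm => if_pos hm)
        have hinner : NV L a (w + 1) (s + 1)
            (fun p => if (L p : ℕ) = s then a p + 1 else x₁ p) = 1 := by
          rw [NV_congr (y := x₁) (fun m hmge => if_neg (by omega))]
          exact hx₁
        have hN : NV L a (w + 1 + 1) s
            (fun p => if (L p : ℕ) = s then a p + 1 else x₁ p) = 0 := by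
          rw [NV_succ, hM, hinner, one_mul]
          decide
        have hN' : NV L' a' (0 + 1) s'
            (fun p => if (L p : ℕ) = s then a p + 1 else x₁ p) = 1 := by
          rw [NV_succ, ← hmon, hM]
          exact show (1 : ZMod 2) * (0 + 1) = 1 by decide
        have hcontra := heq (fun p => if (L p : ℕ) = s then a p + 1 else x₁ p)
        rw [hN, hN'] at hcontra
        exact absurd hcontra (by decide)
      obtain ⟨w', rfl⟩ : ∃ w', u' = w' + 1 := ⟨u' - 1, by omega⟩
      have hinner_eq : ∀ x, NV L a (w + 1) (s + 1) x = NV L' a' (w' + 1) (s' + 1) x := by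
        intro x
        have e1 : NV L a (w + 1) (s + 1) x
            = NV L a (w + 1) (s + 1) (fun p => if (L p : ℕ) = s then a p + 1 else x p) :=
          NV_congr (fun m hm => (if_neg (by omega)).symm)
        have e2 : NV L' a' (w' + 1) (s' + 1) x
            = NV L' a' (w' + 1) (s' + 1) (fun p => if (L p : ℕ) = s then a p + 1 else x p) :=
          NV_congr (fun m hm => (if_neg (fun hc => by
            have := (hfirst m).mp hc; omega)).symm)
        have hM : layerMon L a s (fun p => if (L p : ℕ) = s then a p + 1 else x p) = 1 :=
          layerMon_eq_one (fun m hm => if_pos hm)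
        have hM' : layerMon L' a' s' (fun p => if (L p : ℕ) = s then a p + 1 else x p) = 1 := by
          rw [← hmon]; exact hM
        have h := heq (fun p => if (L p : ℕ) = s then a p + 1 else x p)
        rw [NV_succ L a (w + 1) s, NV_succ L' a' (w' + 1) s', hM, hM', one_mul, one_mul] at h
        have h2 := add_right_cancel h
        rw [e1, e2, h2]
      obtain ⟨huw, hmons⟩ := IH (w' + 1) (s + 1) (s' + 1) (by omega) (by omega)
        (by omega) (by omega)
        (fun j => by have h1 := hiff j; have h2 := hfirst j; omega) hinner_eq
      refine ⟨by omega, fun i => ?_⟩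
      cases i with
      | zero => simpa using hmon
      | succ w2 =>
        have hh := hmons w2
        rw [show s + (w2 + 1) = s + 1 + w2 by omega,
          show s' + (w2 + 1) = s' + 1 + w2 by omega]
        exact hh

/-- Uniqueness of the layered form (n ≥ 2): two layered-form representations
of the same function have the same number of layers `r`, the same constant
`b`, and the same extended monomials `Mᵢ` (as functions). -/
theorem statement6 {n r r' : ℕ} (hn : 2 ≤ n)
    (f : (Fin n → ZMod 2) → ZMod 2)
    (L : Fin n → Fin r) (a : Fin n → ZMod 2) (b : ZMod 2)
    (L' : Fin n → Fin r') (a' : Fin n → ZMod 2) (b' : ZMod 2)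
    (h : IsLayeredForm f L a b) (h' : IsLayeredForm f L' a' b') :
    r = r' ∧ b = b' ∧ ∀ i : ℕ, layerMon L a i = layerMon L' a' i := by
  obtain ⟨hr1, hsz, hlast, hf⟩ := h
  obtain ⟨hr1', hsz', hlast', hf'⟩ := h'
  have hne : ∀ i, i < r → ∃ m, (L m : ℕ) = i := by
    intro i hi
    have h2 : (Finset.univ.filter (fun m : Fin n => (L m : ℕ) = i)).Nonempty := by
      rw [← Finset.card_pos]
      exact hsz ⟨i, hi⟩
    obtain ⟨m, hm⟩ := h2
    exact ⟨m, (Finset.mem_filter.mp hm).2⟩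
  have hne' : ∀ i, i < r' → ∃ m, (L' m : ℕ) = i := by
    intro i hi
    have h2 : (Finset.univ.filter (fun m : Fin n => (L' m : ℕ) = i)).Nonempty := by
      rw [← Finset.card_pos]
      exact hsz' ⟨i, hi⟩
    obtain ⟨m, hm⟩ := h2
    exact ⟨m, (Finset.mem_filter.mp hm).2⟩
  have heqb : ∀ x, NV L a r 0 x + b = NV L' a' r' 0 x + b' :=
    fun x => (hf x).symm.trans (hf' x)
  have hb : b = b' := by
    by_contra hbb
    have hkey : ∀ u v p q : ZMod 2, u + p = v + q → p ≠ q → u = v + 1 := by decide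
    obtain ⟨j0, hj0⟩ := hne' 0 (by omega)
    obtain ⟨x, hxj, hx0⟩ := exists_NV_zero a (t := r) (s := 0) (by omega) hne hlast j0 (a' j0)
    have h1 : NV L' a' r' 0 x = 1 := by
      have hh := hkey _ _ _ _ (heqb x) hbb
      rw [hx0] at hh
      have hz : ∀ v : ZMod 2, (0 : ZMod 2) = v + 1 → v = 1 := by decide
      exact hz _ hh
    have hfac := NV_one_factor (t := r') (by omega) h1 hj0
    rw [hxj] at hfac
    exact z2_add_one_ne (a' j0) hfac.symm
  have hNN : ∀ x, NV L a r 0 x = NV L' a' r' 0 x := by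
    intro x
    have hh := heqb x
    rw [hb] at hh
    exact add_right_cancel hh
  obtain ⟨hrr, hmm⟩ := main_unique hne hlast hne' hlast' r r' 0 0 (by omega) (by omega)
    (by omega) (by omega) (fun j => by omega) hNN
  exact ⟨hrr, hb, fun i => by simpa using hmm i⟩
end
end

section
/- For n ≥ 2 and any r, the number of nested canalizing functions f : 𝔽₂ⁿ → 𝔽₂ (in n essential variables) with layer number r is |NCF(n,r)| = 2^{n+1} · Σ n!/(k₁!·k₂!⋯k_r!), where the sum is over all tuples (k₁,…,k_r) of positive integers with k₁ + ⋯ + k_r = n and k_r ≥ 2. -/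
set_option linter.unusedSectionVars false
set_option maxHeartbeats 1000000


lemma zmod2_ne {x y : ZMod 2} (h : x ≠ y) : x = y + 1 := by
  have : ∀ x y : ZMod 2, x ≠ y → x = y + 1 := by decide
  exact this x y h

lemma zmod2_add_self (x : ZMod 2) : x + x = 0 := by
  have : ∀ x : ZMod 2, x + x = 0 := by decide
  exact this x

lemma zmod2_self_ne_add_one (x : ZMod 2) : x ≠ x + 1 := by
  have : ∀ x : ZMod 2, x ≠ x + 1 := by decide
  exact this x

section General

variable {α : Type} [Fintype α] [DecidableEq α] {r : ℕ}

def gMon (L : α → Fin r) (a : α → ZMod 2) (i : ℕ) (x : α → ZMod 2) : ZMod 2 :=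
  ∏ j ∈ Finset.univ.filter (fun j : α => (L j : ℕ) = i), (x j + a j)

def gSize (L : α → Fin r) (i : ℕ) : ℕ :=
  (Finset.univ.filter (fun j : α => (L j : ℕ) = i)).card

def gForm (f : (α → ZMod 2) → ZMod 2) (L : α → Fin r) (a : α → ZMod 2) (b : ZMod 2) : Prop :=
  1 ≤ r ∧
  (∀ i : Fin r, 1 ≤ gSize L (i : ℕ)) ∧
  2 ≤ gSize L (r - 1) ∧
  ∀ x : α → ZMod 2, f x = nestVal (fun i => gMon L a i x) r 0 + b

lemma nest_succ (M : ℕ → ZMod 2) (t s : ℕ) :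
    nestVal M (t + 1) s = M s * (nestVal M t (s + 1) + 1) := by
  cases t with
  | zero => simp [nestVal]
  | succ t => rfl

lemma nest_zero {M : ℕ → ZMod 2} {t s : ℕ} (h : M s = 0) :
    nestVal M (t + 1) s = 0 := by
  rw [nest_succ, h, zero_mul]

lemma nest_one {M : ℕ → ZMod 2} {t s : ℕ} (h1 : M s = 1)
    (h0 : nestVal M t (s + 1) = 0) : nestVal M (t + 1) s = 1 := by
  rw [nest_succ, h1, h0]; ring

lemma nest_one' {M : ℕ → ZMod 2} {t s : ℕ} (h1 : M s = 1)
    (h0 : nestVal M t (s + 1) = 1) : nestVal M (t + 1) s = 0 := by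
  rw [nest_succ, h1, h0]; decide

lemma nest_shift (M : ℕ → ZMod 2) (t s : ℕ) :
    nestVal M t (s + 1) = nestVal (fun i => M (i + 1)) t s := by
  induction t generalizing s with
  | zero => rfl
  | succ t ih => rw [nest_succ, nest_succ, ih]

lemma gMon_pattern (L : α → Fin r) (a p : α → ZMod 2) (i : ℕ) :
    gMon L a i (fun u => a u + p u) =
      ∏ j ∈ Finset.univ.filter (fun j : α => (L j : ℕ) = i), p j := by
  unfold gMon
  refine Finset.prod_congr rfl fun j _ => ?_
  ring_nf
  rw [show (2 : ZMod 2) = 0 by rfl]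
  ring

lemma gMon_one {L : α → Fin r} {a p : α → ZMod 2} {i : ℕ}
    (h : ∀ u, (L u : ℕ) = i → p u = 1) :
    gMon L a i (fun u => a u + p u) = 1 := by
  rw [gMon_pattern]
  exact Finset.prod_eq_one fun j hj => h j (by simpa using hj)

lemma gMon_zero {L : α → Fin r} {a p : α → ZMod 2} {i : ℕ} {u : α}
    (hu : (L u : ℕ) = i) (h : p u = 0) :
    gMon L a i (fun u => a u + p u) = 0 := by
  rw [gMon_pattern]
  exact Finset.prod_eq_zero (by simpa using hu) h

lemma gMon_zero' {L : α → Fin r} {a : α → ZMod 2} {i : ℕ} {u : α} {x : α → ZMod 2}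
    (hu : (L u : ℕ) = i) (h : x u + a u = 0) :
    gMon L a i x = 0 :=
  Finset.prod_eq_zero (by simpa using hu) h

lemma layer_mem {L : α → Fin r} (hne : ∀ i : Fin r, 1 ≤ gSize L (i : ℕ))
    {i : ℕ} (hi : i < r) : ∃ u, (L u : ℕ) = i := by
  have h := hne ⟨i, hi⟩
  rw [gSize] at h
  obtain ⟨u, hu⟩ := Finset.card_pos.mp h
  exact ⟨u, (Finset.mem_filter.mp hu).2⟩

/-- KEY: if `j` is not a layer-0 variable with its canalizing input, then `f` can differ
from the canalized value while `x j = c`. -/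
lemma key {L : α → Fin r} {a : α → ZMod 2}
    (hr : 1 ≤ r) (hne : ∀ i : Fin r, 1 ≤ gSize L (i : ℕ)) (hlast : 2 ≤ gSize L (r - 1))
    (j : α) (c : ZMod 2) (h : ¬((L j : ℕ) = 0 ∧ c = a j)) :
    ∃ x : α → ZMod 2, x j = c ∧ nestVal (fun i => gMon L a i x) r 0 = 1 := by
  by_cases hc : c = a j
  · -- then L j ≠ 0, and r ≥ 2
    have hij : (L j : ℕ) ≠ 0 := fun h0 => h ⟨h0, hc⟩
    have hjr : (L j : ℕ) < r := (L j).2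
    have hr2 : 2 ≤ r := by omega
    obtain ⟨u, hu⟩ := layer_mem hne (show 1 < r by omega)
    set p : α → ZMod 2 := fun v => if v = j ∨ v = u then 0 else 1 with hp
    refine ⟨fun v => a v + p v, ?_, ?_⟩
    · simp [hp, hc]
    · obtain ⟨t, rfl⟩ : ∃ t, r = t + 2 := ⟨r - 2, by omega⟩
      have hM0 : gMon L a 0 (fun v => a v + p v) = 1 := by
        refine gMon_one fun v hv => ?_
        have hvj : v ≠ j := fun e => hij (e ▸ hv)
        have hvu : v ≠ u := fun e => by rw [e, hu] at hv; omega
        simp [hp, hvj, hvu]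
      have hM1 : gMon L a 1 (fun v => a v + p v) = 0 :=
        gMon_zero hu (by simp [hp])
      have h1 : nestVal (fun i => gMon L a i (fun v => a v + p v)) (t + 1) 1 = 0 :=
        nest_zero hM1
      exact nest_one hM0 h1
  · have hc1 : c = a j + 1 := zmod2_ne hc
    by_cases hr1 : r = 1
    · subst hr1
      refine ⟨fun v => a v + (fun _ => (1:ZMod 2)) v, by simpa using hc1.symm, ?_⟩
      show nestVal _ 1 0 = 1
      show gMon L a 0 _ = 1
      exact gMon_one fun _ _ => rfl
    · have hr2 : 2 ≤ r := by omega
      by_cases hu : ∃ u, (L u : ℕ) = 1 ∧ u ≠ j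
      · obtain ⟨u, hu1, huj⟩ := hu
        set p : α → ZMod 2 := fun v => if v = u then 0 else 1 with hp
        refine ⟨fun v => a v + p v, ?_, ?_⟩
        · simp [hp, Ne.symm huj, hc1]
        · obtain ⟨t, rfl⟩ : ∃ t, r = t + 2 := ⟨r - 2, by omega⟩
          have hM0 : gMon L a 0 (fun v => a v + p v) = 1 := by
            refine gMon_one fun v hv => ?_
            have hvu : v ≠ u := fun e => by rw [e, hu1] at hv; omega
            simp [hp, hvu]
          have hM1 : gMon L a 1 (fun v => a v + p v) = 0 :=
            gMon_zero hu1 (by simp [hp])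
          exact nest_one hM0 (nest_zero hM1)
      · -- layer 1 = {j}, so r ≥ 3
        push_neg at hu
        obtain ⟨u0, hu0⟩ := layer_mem hne (show 1 < r by omega)
        have hLj : (L j : ℕ) = 1 := by
          have e := hu u0 hu0; rwa [e] at hu0
        have hk1 : gSize L 1 ≤ 1 := by
          rw [gSize]
          calc (Finset.univ.filter (fun v : α => (L v : ℕ) = 1)).card
              ≤ ({j} : Finset α).card := by
                refine Finset.card_le_card fun v hv => ?_
                simp only [Finset.mem_filter, Finset.mem_univ, true_and] at hv
                simp [hu v hv]
            _ = 1 := Finset.card_singleton j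
        have hrne2 : r ≠ 2 := by
          intro e; subst e
          have : (2:ℕ) - 1 = 1 := rfl
          rw [this] at hlast; omega
        obtain ⟨t, rfl⟩ : ∃ t, r = t + 3 := ⟨r - 3, by omega⟩
        set p : α → ZMod 2 := fun v => if (L v : ℕ) = 3 then 0 else 1 with hp
        refine ⟨fun v => a v + p v, ?_, ?_⟩
        · simp [hp, hLj, hc1]
        · have hM0 : gMon L a 0 (fun v => a v + p v) = 1 :=
            gMon_one fun v hv => by simp [hp, hv]
          have hM1 : gMon L a 1 (fun v => a v + p v) = 1 :=
            gMon_one fun v hv => by simp [hp, hv]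
          have hM2 : gMon L a 2 (fun v => a v + p v) = 1 :=
            gMon_one fun v hv => by simp [hp, hv]
          have h2 : nestVal (fun i => gMon L a i (fun v => a v + p v)) (t + 1) 2 = 1 := by
            cases t with
            | zero => exact hM2
            | succ t' =>
              obtain ⟨w, hw⟩ := layer_mem hne (show 3 < t' + 1 + 3 by omega)
              exact nest_one hM2 (nest_zero (gMon_zero hw (by simp [hp, hw])))
          exact nest_one hM0 (nest_one' hM1 h2)
  
/-- witness: a point complementing a given layer-0 variable where the nest vanishes. -/
lemma wit {L : α → Fin r} {a : α → ZMod 2}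
    (hr : 1 ≤ r) (hne : ∀ i : Fin r, 1 ≤ gSize L (i : ℕ)) (hlast : 2 ≤ gSize L (r - 1))
    (j₀ : α) (hj₀ : (L j₀ : ℕ) = 0) :
    ∃ y : α → ZMod 2, y j₀ = a j₀ + 1 ∧ nestVal (fun i => gMon L a i y) r 0 = 0 := by
  by_cases hr1 : r = 1
  · subst hr1
    have h1 : (1:ℕ) - 1 = 0 := rfl
    rw [h1, gSize] at hlast
    obtain ⟨j₁, hj₁m, hj₁⟩ :=
      Finset.exists_mem_ne
        (s := Finset.univ.filter (fun j : α => (L j : ℕ) = 0)) (by omega) j₀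
    simp only [Finset.mem_filter, Finset.mem_univ, true_and] at hj₁m
    set p : α → ZMod 2 := fun v => if v = j₁ then 0 else 1 with hp
    refine ⟨fun v => a v + p v, by simp [hp, Ne.symm hj₁], ?_⟩
    exact gMon_zero hj₁m (by simp [hp])
  · have hr2 : 2 ≤ r := by omega
    obtain ⟨t, rfl⟩ : ∃ t, r = t + 2 := ⟨r - 2, by omega⟩
    set p : α → ZMod 2 := fun v => if (L v : ℕ) = 2 then 0 else 1 with hp
    refine ⟨fun v => a v + p v, by simp [hp, hj₀], ?_⟩
    have hM0 : gMon L a 0 (fun v => a v + p v) = 1 :=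
      gMon_one fun v hv => by simp [hp, hv]
    have hM1 : gMon L a 1 (fun v => a v + p v) = 1 :=
      gMon_one fun v hv => by simp [hp, hv]
    have h1 : nestVal (fun i => gMon L a i (fun v => a v + p v)) (t + 1) 1 = 1 := by
      cases t with
      | zero => exact hM1
      | succ t' =>
        obtain ⟨w, hw⟩ := layer_mem hne (show 2 < t' + 1 + 2 by omega)
        exact nest_one hM1 (nest_zero (gMon_zero hw (by simp [hp, hw])))
    exact nest_one' hM0 h1

lemma canal0 {f : (α → ZMod 2) → ZMod 2} {L : α → Fin r} {a : α → ZMod 2} {b : ZMod 2}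
    (hform : gForm f L a b) {j : α} (hj : (L j : ℕ) = 0)
    {x : α → ZMod 2} (hx : x j = a j) : f x = b := by
  obtain ⟨hr, hne, hlast, hval⟩ := hform
  obtain ⟨t, rfl⟩ : ∃ t, r = t + 1 := ⟨r - 1, by omega⟩
  rw [hval x, nest_zero (gMon_zero' hj (by rw [hx]; exact zmod2_add_self _)), zero_add]

lemma card_lt {f : (α → ZMod 2) → ZMod 2} {L : α → Fin r} {a : α → ZMod 2} {b : ZMod 2}
    (hform : gForm f L a b) :
    (Finset.univ.filter (fun x : α → ZMod 2 => f x = b + 1)).card <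
      (Finset.univ.filter (fun x : α → ZMod 2 => f x = b)).card := by
  obtain ⟨hr, hne, hlast, hval⟩ := hform
  obtain ⟨j₀, hj₀⟩ := layer_mem hne (show 0 < r by omega)
  obtain ⟨y, hy₀, hy⟩ := wit hr hne hlast j₀ hj₀
  have hfy : f y = b := by rw [hval y, hy, zero_add]
  set S₁ := Finset.univ.filter (fun x : α → ZMod 2 => f x = b + 1) with hS₁
  set S₀ := Finset.univ.filter (fun x : α → ZMod 2 => f x = b) with hS₀
  have hyS₀ : y ∈ S₀ := by simp [hS₀, hfy]
  have hmem : ∀ x ∈ S₁, x j₀ = a j₀ + 1 := by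
    intro x hx
    simp only [hS₁, Finset.mem_filter, Finset.mem_univ, true_and] at hx
    by_contra hne'
    have hxj : x j₀ = a j₀ := by
      by_contra h'
      exact hne' (zmod2_ne h')
    have := canal0 ⟨hr, hne, hlast, hval⟩ hj₀ hxj
    rw [hx] at this
    exact zmod2_self_ne_add_one b this.symm
  have hsub : S₁.image (fun x => Function.update x j₀ (a j₀)) ⊆ S₀.erase y := by
    intro z hz
    obtain ⟨x, hx, rfl⟩ := Finset.mem_image.mp hz
    refine Finset.mem_erase.mpr ⟨?_, ?_⟩
    · intro he
      have : y j₀ = a j₀ := by rw [← he]; simp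
      rw [hy₀] at this
      exact zmod2_self_ne_add_one (a j₀) this.symm
    · simp only [hS₀, Finset.mem_filter, Finset.mem_univ, true_and]
      exact canal0 ⟨hr, hne, hlast, hval⟩ hj₀ (by simp)
  have hinj : Set.InjOn (fun x => Function.update x j₀ (a j₀)) (S₁ : Set (α → ZMod 2)) := by
    intro x hx x' hx' he
    rw [Finset.mem_coe] at hx hx' 
    funext u
    by_cases hu : u = j₀
    · subst hu; rw [hmem x hx, hmem x' hx']
    · have := congrFun he u
      simpa [Function.update, hu] using this
  calc S₁.card = (S₁.image (fun x => Function.update x j₀ (a j₀))).card :=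
        (Finset.card_image_of_injOn hinj).symm
    _ ≤ (S₀.erase y).card := Finset.card_le_card hsub
    _ < S₀.card := Finset.card_erase_lt_of_mem hyS₀

lemma b_eq {f : (α → ZMod 2) → ZMod 2} {L L' : α → Fin r} {a a' : α → ZMod 2} {b b' : ZMod 2}
    (h : gForm f L a b) (h' : gForm f L' a' b') : b = b' := by
  by_contra hne'
  have hb : b' = b + 1 := zmod2_ne (Ne.symm hne')
  have h1 := card_lt h
  have h2 := card_lt h'
  rw [hb] at h2
  have hbb : b + 1 + 1 = b := by
    rw [add_assoc, (by decide : (1:ZMod 2) + 1 = 0), add_zero]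
  rw [hbb] at h2
  omega

lemma layer0_eq {f : (α → ZMod 2) → ZMod 2} {L L' : α → Fin r} {a a' : α → ZMod 2} {b b' : ZMod 2}
    (h : gForm f L a b) (h' : gForm f L' a' b') {j : α} (hj : (L j : ℕ) = 0) :
    (L' j : ℕ) = 0 ∧ a' j = a j := by
  have hb := b_eq h h'
  by_contra hcon
  have hkey : ¬((L' j : ℕ) = 0 ∧ (a j : ZMod 2) = a' j) := by
    intro ⟨h1, h2⟩
    exact hcon ⟨h1, h2.symm⟩
  obtain ⟨x, hxj, hx⟩ := key h'.1 h'.2.1 h'.2.2.1 j (a j) hkey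
  have hfx : f x = b' + 1 := by rw [h'.2.2.2 x, hx]; ring
  have hfx' : f x = b := canal0 h hj hxj
  rw [hfx', hb] at hfx
  exact zmod2_self_ne_add_one b' hfx

lemma zmod2_compl (v : ZMod 2) : v + 1 + v = 1 := by
  have : ∀ v : ZMod 2, v + 1 + v = 1 := by decide
  exact this v

def subL {r' : ℕ} (L : α → Fin (r' + 1)) (P : α → Prop) [DecidablePred P]
    (hP : ∀ u, P u ↔ (L u : ℕ) ≠ 0) (j : {u : α // P u}) : Fin r' :=
  ⟨(L j.1 : ℕ) - 1, by have h2 := (L j.1).2; have h1 := (hP j.1).mp j.2; omega⟩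

lemma subL_size {r' : ℕ} (L : α → Fin (r' + 1)) (P : α → Prop) [DecidablePred P]
    (hP : ∀ u, P u ↔ (L u : ℕ) ≠ 0) (i : ℕ) :
    gSize (subL L P hP) i = gSize L (i + 1) := by
  rw [gSize, gSize]
  refine Finset.card_bij' (fun j _ => j.1)
    (fun u hu => ⟨u, (hP u).mpr (by simp only [Finset.mem_filter] at hu; omega)⟩)
    ?_ ?_ ?_ ?_
  · intro j hj
    simp only [Finset.mem_filter, Finset.mem_univ, true_and] at hj ⊢
    simp only [subL] at hj ⊢
    have := (hP j.1).mp j.2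
    omega
  · intro u hu
    simp only [Finset.mem_filter, Finset.mem_univ, true_and] at hu ⊢
    simp only [subL] at hu ⊢
    omega
  · intro j _; rfl
  · intro u _; rfl

lemma subMon {r' : ℕ} (L : α → Fin (r' + 1)) (P : α → Prop) [DecidablePred P]
    (hP : ∀ u, P u ↔ (L u : ℕ) ≠ 0) (a : α → ZMod 2) (i : ℕ)
    (y : {u : α // P u} → ZMod 2) (E : α → ZMod 2) (hE : ∀ u (h : P u), E u = y ⟨u, h⟩) :
    gMon (subL L P hP) (fun j => a j.1) i y = gMon L a (i + 1) E := by
  rw [gMon, gMon]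
  refine Finset.prod_bij' (fun j _ => j.1)
    (fun u hu => ⟨u, (hP u).mpr (by simp only [Finset.mem_filter] at hu; omega)⟩)
    ?_ ?_ ?_ ?_ ?_
  · intro j hj
    simp only [Finset.mem_filter, Finset.mem_univ, true_and] at hj ⊢
    simp only [subL] at hj ⊢
    have := (hP j.1).mp j.2
    omega
  · intro u hu
    simp only [Finset.mem_filter, Finset.mem_univ, true_and] at hu ⊢
    simp only [subL] at hu ⊢
    omega
  · intro j _; rfl
  · intro u _; rfl
  · intro j _
    rw [hE j.1 j.2]

lemma descend {r' : ℕ} (hr' : 1 ≤ r') {f : (α → ZMod 2) → ZMod 2}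
    {L : α → Fin (r' + 1)} {a : α → ZMod 2} {b : ZMod 2}
    (h : gForm f L a b) (P : α → Prop) [DecidablePred P]
    (hP : ∀ u, P u ↔ (L u : ℕ) ≠ 0)
    (aext : α → ZMod 2) (ha : ∀ u, ¬ P u → aext u = a u + 1) :
    gForm (fun (y : {u : α // P u} → ZMod 2) =>
        f (fun u => if h : P u then y ⟨u, h⟩ else aext u))
      (subL L P hP) (fun j => a j.1) (b + 1) := by
  refine ⟨hr', ?_, ?_, ?_⟩
  · intro i
    rw [subL_size]
    exact h.2.1 ⟨(i : ℕ) + 1, by omega⟩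
  · rw [subL_size]
    have e1 : r' - 1 + 1 = r' := by omega
    have e2 : r' + 1 - 1 = r' := by omega
    rw [e1]
    have := h.2.2.1
    rwa [e2] at this
  · intro y
    set E : α → ZMod 2 := fun u => if h : P u then y ⟨u, h⟩ else aext u with hEdef
    have hE : ∀ u (hu : P u), E u = y ⟨u, hu⟩ := fun u hu => by simp [hEdef, hu]
    show f E = _
    rw [h.2.2.2 E]
    have hM0 : gMon L a 0 E = 1 := by
      refine Finset.prod_eq_one fun u hu => ?_
      simp only [Finset.mem_filter, Finset.mem_univ, true_and] at hu
      have hPu : ¬ P u := fun hp => (hP u).mp hp hu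
      have : E u = a u + 1 := by rw [hEdef]; simp [hPu, ha u hPu]
      rw [this, zmod2_compl]
    rw [nest_succ, hM0, one_mul, nest_shift]
    have : (fun i => gMon L a (i + 1) E) = (fun i => gMon (subL L P hP) (fun j => a j.1) i y) := by
      funext i
      exact (subMon L P hP a i y E hE).symm
    rw [this]
    ring

end General

theorem gu : ∀ (r : ℕ) (α : Type) [Fintype α] [DecidableEq α]
    (f : (α → ZMod 2) → ZMod 2) (L L' : α → Fin r) (a a' : α → ZMod 2) (b b' : ZMod 2),
    gForm f L a b → gForm f L' a' b' → L = L' ∧ a = a' ∧ b = b' := by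
  intro r
  induction r with
  | zero =>
    intro α _ _ f L L' a a' b b' h _
    exact absurd h.1 (by omega)
  | succ r' ih =>
    intro α _ _ f L L' a a' b b' h h'
    have hb : b = b' := b_eq h h'
    have hl0 : ∀ j, (L j : ℕ) = 0 → (L' j : ℕ) = 0 ∧ a' j = a j :=
      fun j hj => layer0_eq h h' hj
    have hl0' : ∀ j, (L' j : ℕ) = 0 → (L j : ℕ) = 0 ∧ a j = a' j :=
      fun j hj => layer0_eq h' h hj
    by_cases hr' : r' = 0
    · subst hr'
      have hall : ∀ j, (L j : ℕ) = 0 := fun j => by have := (L j).2; omega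
      refine ⟨funext fun j => ?_, funext fun j => ?_, hb⟩
      · have h1 := hall j
        have h2 : (L' j : ℕ) = 0 := (hl0 j h1).1
        exact Fin.ext (by omega)
      exact ((hl0 j (hall j)).2).symm
    · have hr1 : 1 ≤ r' := by omega
      set P : α → Prop := fun u => (L u : ℕ) ≠ 0 with hPdef
      have hP : ∀ u, P u ↔ (L u : ℕ) ≠ 0 := fun u => Iff.rfl
      have hP' : ∀ u, P u ↔ (L' u : ℕ) ≠ 0 := by
        intro u
        constructor
        · intro hp he
          exact hp (hl0' u he).1
        · intro hp he
          exact hp (hl0 u he).1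
      have hd := descend hr1 h P hP (fun u => a u + 1) (fun u _ => rfl)
      have hd' := descend hr1 h' P hP' (fun u => a u + 1)
        (fun u hu => by
          have h0 : (L u : ℕ) = 0 := not_not.mp hu
          rw [(hl0 u h0).2])
      obtain ⟨hL, ha, _⟩ := ih {u : α // P u} (fun y =>
          f (fun u => if h : P u then y ⟨u, h⟩ else a u + 1))
        (subL L P hP) (subL L' P hP') (fun j => a j.1) (fun j => a' j.1)
        (b + 1) (b' + 1) hd hd'
      refine ⟨funext fun u => ?_, funext fun u => ?_, hb⟩
      · by_cases h0 : (L u : ℕ) = 0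
        · have h1 := (hl0 u h0).1
          exact Fin.ext (by omega)
        · have hc := congrArg Fin.val (congrFun hL ⟨u, h0⟩)
          simp only [subL] at hc
          have hL'0 : (L' u : ℕ) ≠ 0 := fun e => h0 (hl0' u e).1
          exact Fin.ext (by omega)
      · by_cases h0 : (L u : ℕ) = 0
        · exact ((hl0 u h0).2).symm
        · exact congrFun ha ⟨u, h0⟩


section Counting

lemma multinomial_map {β γ : Type*} (e : β ↪ γ) (s : Finset β) (f : γ → ℕ) :
    Nat.multinomial (s.map e) f = Nat.multinomial s (f ∘ e) := by
  unfold Nat.multinomial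
  rw [Finset.sum_map, Finset.prod_map]
  rfl

lemma countL : ∀ (r : ℕ) (α : Type) [Fintype α] [DecidableEq α] (k : Fin r → ℕ),
    (∑ i, k i = Fintype.card α) →
    (Finset.univ.filter (fun L : α → Fin r =>
        ∀ i : Fin r, (Finset.univ.filter (fun j => L j = i)).card = k i)).card =
      Nat.multinomial Finset.univ k := by
  intro r
  induction r with
  | zero =>
    intro α _ _ k hsum
    have hcard : Fintype.card α = 0 := by simpa using hsum.symm
    have : IsEmpty α := Fintype.card_eq_zero_iff.mp hcard
    rw [Finset.filter_true_of_mem (fun L _ => fun i : Fin 0 => i.elim0)]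
    rw [Finset.card_univ, Fintype.card_fun, Fintype.card_fin, hcard, pow_zero]
    rw [Finset.univ_eq_empty, Nat.multinomial_empty]
  | succ r ih =>
    intro α _ _ k hsum
    set m := k (Fin.last r) with hm
    have hfib : ∀ L ∈ Finset.univ.filter (fun Lf : α → Fin (r+1) =>
        ∀ i : Fin (r+1), (Finset.univ.filter (fun j => Lf j = i)).card = k i),
        (Finset.univ.filter (fun j => L j = Fin.last r)) ∈
          Finset.powersetCard m (Finset.univ : Finset α) := by
      intro L hL
      rw [Finset.mem_powersetCard_univ]
      exact (Finset.mem_filter.mp hL).2 (Fin.last r)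
    rw [Finset.card_eq_sum_card_fiberwise hfib]
    have hper : ∀ S ∈ Finset.powersetCard m (Finset.univ : Finset α),
        ((Finset.univ.filter (fun Lf : α → Fin (r+1) =>
          ∀ i : Fin (r+1), (Finset.univ.filter (fun j => Lf j = i)).card = k i)).filter
            (fun L => Finset.univ.filter (fun j => L j = Fin.last r) = S)).card =
          Nat.multinomial Finset.univ (fun i : Fin r => k i.castSucc) := by
      intro S hS
      rw [Finset.mem_powersetCard_univ] at hS
      have hcompl : Fintype.card {u : α // u ∉ S} = ∑ i : Fin r, k i.castSucc := by
        have h1 : Fintype.card {u : α // u ∉ S} = Fintype.card α - S.card := by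
          rw [Fintype.card_subtype_compl]
          congr 1
          exact Fintype.card_coe S
        have h2 := hsum
        rw [Fin.sum_univ_castSucc] at h2
        have h3 : m ≤ Fintype.card α := hS ▸ Finset.card_le_univ S
        rw [h1, hS]
        omega
      rw [← ih {u : α // u ∉ S} (fun i => k i.castSucc) hcompl.symm]
      refine Finset.card_bij'
        (fun L hL => fun u : {u : α // u ∉ S} =>
          (L u.1).castPred (by
            have hLS := (Finset.mem_filter.mp hL).2
            intro he
            exact u.2 (hLS ▸ (by simp [he]))))
        (fun L' _ => fun v : α =>
          if h : v ∈ S then Fin.last r else (L' ⟨v, h⟩).castSucc)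
        ?_ ?_ ?_ ?_
      · -- forward lands in target
        intro L hL
        have hLS := (Finset.mem_filter.mp hL).2
        have hcond := (Finset.mem_filter.mp (Finset.mem_filter.mp hL).1).2
        simp only [Finset.mem_filter, Finset.mem_univ, true_and]
        intro i
        have hq : ∀ v, L v = i.castSucc → v ∉ S := by
          intro v hv hvS
          rw [← hLS] at hvS
          simp only [Finset.mem_filter, Finset.mem_univ, true_and] at hvS
          rw [hv] at hvS
          exact (Fin.castSucc_lt_last i).ne hvS
        rw [← hcond i.castSucc]
        refine Finset.card_bij' (fun u _ => u.1)
          (fun v hv => ⟨v, hq v (by simpa using hv)⟩) ?_ ?_ ?_ ?_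
        · intro u hu
          simp only [Finset.mem_filter, Finset.mem_univ, true_and] at hu ⊢
          rw [← hu, Fin.castSucc_castPred]
        · intro v hv
          simp only [Finset.mem_filter, Finset.mem_univ, true_and] at hv ⊢
          apply Fin.castSucc_injective
          rw [Fin.castSucc_castPred, hv]
        · intro u _; rfl
        · intro v _; rfl
      · -- backward lands in source
        intro L' hL'
        have hcond := (Finset.mem_filter.mp hL').2
        have htS : Finset.univ.filter (fun v =>
            (if h : v ∈ S then Fin.last r else (L' ⟨v, h⟩).castSucc) = Fin.last r) = S := by
          ext v
          simp only [Finset.mem_filter, Finset.mem_univ, true_and]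
          by_cases h : v ∈ S
          · simp [h]
          · rw [dif_neg h]
            exact iff_of_false (Fin.castSucc_lt_last _).ne h
        refine Finset.mem_filter.mpr ⟨Finset.mem_filter.mpr ⟨Finset.mem_univ _, ?_⟩, htS⟩
        intro i
        refine Fin.lastCases ?_ ?_ i
        · rw [htS, hS]
        · intro i'
          rw [← hcond i']
          refine Finset.card_bij' (fun v hv => (⟨v, ?_⟩ : {u : α // u ∉ S}))
            (fun u _ => u.1) ?_ ?_ ?_ ?_
          · simp only [Finset.mem_filter, Finset.mem_univ, true_and] at hv
            intro hvS
            rw [dif_pos hvS] at hv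
            exact (Fin.castSucc_lt_last i').ne hv.symm
          · intro v hv
            simp only [Finset.mem_filter, Finset.mem_univ, true_and] at hv ⊢
            have hvS : v ∉ S := by
              intro hvS
              rw [dif_pos hvS] at hv
              exact (Fin.castSucc_lt_last i').ne hv.symm
            rw [dif_neg hvS] at hv
            exact Fin.castSucc_injective _ hv
          · intro u hu
            simp only [Finset.mem_filter, Finset.mem_univ, true_and] at hu ⊢
            rw [dif_neg u.2, hu]
          · intro v _; rfl
          · intro u _; rfl
      · -- left inverse
        intro L hL
        have hLS := (Finset.mem_filter.mp hL).2
        funext v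
        beta_reduce
        by_cases h : v ∈ S
        · rw [dif_pos h]
          rw [← hLS] at h
          simp only [Finset.mem_filter, Finset.mem_univ, true_and] at h
          exact h.symm
        · rw [dif_neg h, Fin.castSucc_castPred]
      · -- right inverse
        intro L' hL'
        funext u
        beta_reduce
        apply Fin.castSucc_injective
        rw [Fin.castSucc_castPred, dif_neg u.2]
    rw [Finset.sum_congr rfl hper, Finset.sum_const, smul_eq_mul,
      Finset.card_powersetCard, Finset.card_univ]
    rw [Fin.univ_castSuccEmb, Nat.multinomial_cons, multinomial_map]
    have hsum2 : ∑ i ∈ Finset.univ.map Fin.castSuccEmb, k i = ∑ i : Fin r, k i.castSucc := by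
      rw [Finset.sum_map]
      rfl
    have hc : Fintype.card α = k (Fin.last r) + ∑ i : Fin r, k i.castSucc := by
      rw [← hsum, Fin.sum_univ_castSucc]
      omega
    rw [hsum2, hc, ← hm]
    congr 1

end Counting

section Assemble

variable {n r : ℕ}

lemma form_eq_gForm (f : (Fin n → ZMod 2) → ZMod 2) (L : Fin n → Fin r)
    (a : Fin n → ZMod 2) (b : ZMod 2) :
    IsLayeredForm f L a b ↔ gForm f L a b := Iff.rfl

lemma gSize_eq_fib {α : Type} [Fintype α] [DecidableEq α] (L : α → Fin r) (i : Fin r) :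
    gSize L (i : ℕ) = (Finset.univ.filter (fun j => L j = i)).card := by
  rw [gSize]
  congr 1
  apply Finset.filter_congr
  intro j _
  simp [Fin.val_inj]

lemma sum_gSize {α : Type} [Fintype α] [DecidableEq α] (L : α → Fin r) :
    ∑ i : Fin r, gSize L (i : ℕ) = Fintype.card α := by
  rw [← Finset.card_univ,
    Finset.card_eq_sum_card_fiberwise (f := L) (t := Finset.univ) (fun x _ => Finset.mem_univ _)]
  apply Finset.sum_congr rfl
  intro i _
  rw [gSize_eq_fib]

theorem statement8' (n r : ℕ) (hn : 2 ≤ n) :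
    Nat.card {f : (Fin n → ZMod 2) → ZMod 2 //
        ∃ (L : Fin n → Fin r) (a : Fin n → ZMod 2) (b : ZMod 2),
          IsLayeredForm f L a b} =
      2 ^ (n + 1) *
        ∑ k ∈ (Finset.Nat.antidiagonalTuple r n).filter
            (fun k => (∀ i, 1 ≤ k i) ∧ ∀ i : Fin r, (i : ℕ) = r - 1 → 2 ≤ k i),
          Nat.multinomial Finset.univ k := by
  rcases Nat.eq_zero_or_pos r with hr | hr
  · subst hr
    have he : IsEmpty {f : (Fin n → ZMod 2) → ZMod 2 //
        ∃ (L : Fin n → Fin 0) (a : Fin n → ZMod 2) (b : ZMod 2), IsLayeredForm f L a b} := by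
      refine ⟨fun ⟨f, L, a, b, h⟩ => ?_⟩
      exact absurd h.1 (by omega)
    rw [Nat.card_of_isEmpty]
    have hae : (Finset.Nat.antidiagonalTuple 0 n) = ∅ := by
      rw [Finset.eq_empty_iff_forall_notMem]
      intro k hk
      rw [Finset.Nat.mem_antidiagonalTuple] at hk
      simp at hk
      omega
    rw [hae, Finset.filter_empty, Finset.sum_empty, mul_zero]
  · -- r ≥ 1
    set C : (Fin n → Fin r) → Prop :=
      fun L => (∀ i : Fin r, 1 ≤ gSize L (i : ℕ)) ∧ 2 ≤ gSize L (r - 1) with hC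
    have hCdec : DecidablePred C := fun L => by rw [hC]; infer_instance
    -- the parametrizing bijection
    set F : (Fin n → Fin r) → (Fin n → ZMod 2) → ZMod 2 → ((Fin n → ZMod 2) → ZMod 2) :=
      fun L a b x => nestVal (fun i => gMon L a i x) r 0 + b with hF
    have hbij : Function.Bijective
        (fun p : {p : (Fin n → Fin r) × (Fin n → ZMod 2) × ZMod 2 // C p.1} =>
          (⟨F p.1.1 p.1.2.1 p.1.2.2,
            ⟨p.1.1, p.1.2.1, p.1.2.2, hr, p.2.1, p.2.2, fun x => rfl⟩⟩ :
          {f : (Fin n → ZMod 2) → ZMod 2 //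
            ∃ (L : Fin n → Fin r) (a : Fin n → ZMod 2) (b : ZMod 2),
              IsLayeredForm f L a b})) := by
      constructor
      · rintro ⟨⟨L, a, b⟩, hp⟩ ⟨⟨L', a', b'⟩, hp'⟩ he
        have hff : F L a b = F L' a' b' := congrArg Subtype.val he
        have h1 : gForm (F L a b) L a b := ⟨hr, hp.1, hp.2, fun x => rfl⟩
        have h2 : gForm (F L a b) L' a' b' := by
          rw [hff]
          exact ⟨hr, hp'.1, hp'.2, fun x => rfl⟩
        obtain ⟨e1, e2, e3⟩ := gu r (Fin n) (F L a b) L L' a a' b b' h1 h2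
        apply Subtype.ext
        simp only [Prod.mk.injEq]
        exact ⟨e1, e2, e3⟩
      · rintro ⟨f, L, a, b, h⟩
        have hg : gForm f L a b := h
        refine ⟨⟨(L, a, b), hg.2.1, hg.2.2.1⟩, ?_⟩
        apply Subtype.ext
        exact (funext fun x => (hg.2.2.2 x)).symm
    rw [← Nat.card_congr (Equiv.ofBijective _ hbij), Nat.card_eq_fintype_card]
    -- split off a and b
    have heq2 : Fintype.card {p : (Fin n → Fin r) × (Fin n → ZMod 2) × ZMod 2 // C p.1} =
        Fintype.card ({L : Fin n → Fin r // C L} × ((Fin n → ZMod 2) × ZMod 2)) := by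
      refine Fintype.card_congr ⟨fun p => (⟨p.1.1, p.2⟩, p.1.2), fun q => ⟨(q.1.1, q.2), q.1.2⟩,
        fun p => rfl, fun q => rfl⟩
    rw [heq2, Fintype.card_prod, Fintype.card_prod, Fintype.card_fun, Fintype.card_fin]
    have hz2 : Fintype.card (ZMod 2) = 2 := rfl
    rw [hz2]
    rw [Fintype.card_subtype]
    -- partition by size vector
    set K := (Finset.Nat.antidiagonalTuple r n).filter
        (fun k => (∀ i, 1 ≤ k i) ∧ ∀ i : Fin r, (i : ℕ) = r - 1 → 2 ≤ k i) with hK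
    have hmapsto : ∀ L ∈ Finset.univ.filter C,
        (fun i : Fin r => gSize L (i : ℕ)) ∈ K := by
      intro L hL
      rw [Finset.mem_filter] at hL
      rw [hK, Finset.mem_filter, Finset.Nat.mem_antidiagonalTuple]
      refine ⟨?_, fun i => hL.2.1 i, fun i hi => ?_⟩
      · rw [sum_gSize, Fintype.card_fin]
      · show 2 ≤ gSize L (i : ℕ)
        rw [hi]
        exact hL.2.2
    rw [Finset.card_eq_sum_card_fiberwise hmapsto]
    have hper : ∀ k ∈ K, ((Finset.univ.filter C).filter
        (fun L => (fun i : Fin r => gSize L (i : ℕ)) = k)).card =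
          Nat.multinomial Finset.univ k := by
      intro k hk
      rw [hK, Finset.mem_filter, Finset.Nat.mem_antidiagonalTuple] at hk
      have hstep : (Finset.univ.filter C).filter
          (fun L => (fun i : Fin r => gSize L (i : ℕ)) = k) =
          Finset.univ.filter (fun L : Fin n → Fin r =>
            ∀ i : Fin r, (Finset.univ.filter (fun j => L j = i)).card = k i) := by
        ext L
        simp only [Finset.mem_filter, Finset.mem_univ, true_and]
        constructor
        · rintro ⟨-, hsz⟩
          intro i
          rw [← gSize_eq_fib]
          exact congrFun hsz i
        · intro hfib
          have hsz : (fun i : Fin r => gSize L (i : ℕ)) = k := by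
            funext i
            rw [gSize_eq_fib]
            exact hfib i
          refine ⟨⟨fun i => ?_, ?_⟩, hsz⟩
          · rw [gSize_eq_fib, hfib i]
            exact hk.2.1 i
          · have hi0 : r - 1 < r := by omega
            have : gSize L (r - 1) = gSize L ((⟨r - 1, hi0⟩ : Fin r) : ℕ) := rfl
            rw [this, gSize_eq_fib, hfib ⟨r - 1, hi0⟩]
            exact hk.2.2 ⟨r - 1, hi0⟩ rfl
      rw [hstep]
      exact countL r (Fin n) k (by rw [hk.1, Fintype.card_fin])
    rw [Finset.sum_congr rfl hper]
    rw [pow_succ]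
    ring

end Assemble


/-- The number of nested canalizing functions in `n` essential variables
(n ≥ 2) with layer number `r` is
`2^{n+1} · Σ n!/(k₁!⋯k_r!)`, the sum being over all tuples of positive
integers `(k₁,…,k_r)` with `k₁ + ⋯ + k_r = n` and `k_r ≥ 2`. -/
theorem statement8 (n r : ℕ) (hn : 2 ≤ n) :
    Nat.card {f : (Fin n → ZMod 2) → ZMod 2 //
        ∃ (L : Fin n → Fin r) (a : Fin n → ZMod 2) (b : ZMod 2),
          IsLayeredForm f L a b} =
      2 ^ (n + 1) *
        ∑ k ∈ (Finset.Nat.antidiagonalTuple r n).filter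
            (fun k => (∀ i, 1 ≤ k i) ∧ ∀ i : Fin r, (i : ℕ) = r - 1 → 2 ≤ k i),
          Nat.multinomial Finset.univ k :=
  statement8' n r hn
end

section
/- For n ≥ 2, the total number of nested canalizing functions f : 𝔽₂ⁿ → 𝔽₂ (in n essential variables) is |NCF(n)| = 2^{n+1} · Σ_{r=1}^{n−1} Σ n!/(k₁!·k₂!⋯k_r!), where the inner sum is over all tuples (k₁,…,k_r) of positive integers with k₁ + ⋯ + k_r = n and k_r ≥ 2. -/
-- ZMod 2 helpers
lemma zmod2_add_one_add_self : ∀ c : ZMod 2, c + 1 + c = 1 := by decide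
lemma zmod2_self_add_self : ∀ c : ZMod 2, c + c = 0 := by decide
lemma zmod2_ne_of : ∀ c d : ZMod 2, c + 1 + d ≠ c + d := by decide
lemma zmod2_eq_of_ne {α c : ZMod 2} (h : α ≠ c + 1) : α = c := by revert h; revert α c; decide

lemma nestVal_zero_of {M : ℕ → ZMod 2} {t i : ℕ} (ht : 1 ≤ t) (h : M i = 0) :
    nestVal M t i = 0 := by
  match t, ht with
  | 1, _ => simpa [nestVal] using h
  | (s+2), _ => simp [nestVal, h]

lemma nestVal_succ_one {M : ℕ → ZMod 2} {t i : ℕ} (ht : 1 ≤ t) (h : M i = 1) :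
    nestVal M (t + 1) i = nestVal M t (i + 1) + 1 := by
  match t, ht with
  | (s+1), _ => show nestVal M (s+2) i = _; simp [nestVal, h, mul_comm]

lemma nestVal_hit {M : ℕ → ZMod 2} :
    ∀ (m t i : ℕ), m < t → (∀ s, s < m → M (i + s) = 1) → M (i + m) = 0 →
      nestVal M t i = (m : ZMod 2) := by
  intro m
  induction m with
  | zero =>
    intro t i ht _ h0
    simpa using nestVal_zero_of ht (by simpa using h0)
  | succ m ih =>
    intro t i ht hones h0
    obtain ⟨u, rfl⟩ : ∃ u, t = u + 1 := ⟨t - 1, by omega⟩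
    rw [nestVal_succ_one (by omega) (by simpa using hones 0 (by omega))]
    rw [ih u (i+1) (by omega) (fun s hs => by
        have := hones (s+1) (by omega); rwa [show i + (s+1) = i + 1 + s by ring] at this)
      (by rwa [show i + 1 + m = i + (m+1) by ring])]
    push_cast
    ring

lemma nestVal_ones {M : ℕ → ZMod 2} :
    ∀ (t i : ℕ), 1 ≤ t → (∀ s, s < t → M (i + s) = 1) → nestVal M t i = (t : ZMod 2) := by
  intro t
  induction t with
  | zero => omega
  | succ t ih =>
    intro i _ hones
    rcases Nat.eq_zero_or_pos t with rfl | ht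
    · simpa [nestVal] using hones 0 (by omega)
    · rw [nestVal_succ_one ht (by simpa using hones 0 (by omega))]
      rw [ih (i+1) ht (fun s hs => by
        have := hones (s+1) (by omega); rwa [show i + (s+1) = i + 1 + s by ring] at this)]
      push_cast
      ring

section eval

variable {n r : ℕ} {f : (Fin n → ZMod 2) → ZMod 2} {L : Fin n → Fin r}
  {a : Fin n → ZMod 2} {b : ZMod 2}

lemma layerMon_one (i : ℕ) (x : Fin n → ZMod 2)
    (hx : ∀ j, (L j : ℕ) = i → x j = a j + 1) : layerMon L a i x = 1 := by
  refine Finset.prod_eq_one fun j hj => ?_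
  rw [hx j (by simpa using hj)]
  exact zmod2_add_one_add_self _

lemma layerMon_zero (i : ℕ) (x : Fin n → ZMod 2) (j : Fin n)
    (hj : (L j : ℕ) = i) (hx : x j = a j) : layerMon L a i x = 0 := by
  refine Finset.prod_eq_zero (i := j) (by simpa using hj) ?_
  rw [hx]; exact zmod2_self_add_self _

lemma eval_hit (h : IsLayeredForm f L a b) (m : ℕ) (hm : m < r) (x : Fin n → ZMod 2)
    (h1 : ∀ j, (L j : ℕ) < m → x j = a j + 1)
    (h2 : ∃ j, (L j : ℕ) = m ∧ x j = a j) :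
    f x = (m : ZMod 2) + b := by
  rw [h.2.2.2 x]
  congr 1
  obtain ⟨j, hj, hxj⟩ := h2
  refine nestVal_hit m r 0 hm (fun s hs => ?_) ?_
  · exact layerMon_one _ x (fun j' hj' => h1 j' (by omega))
  · exact layerMon_zero _ x j (by simpa using hj) hxj

lemma eval_ones (h : IsLayeredForm f L a b) (x : Fin n → ZMod 2)
    (hx : ∀ j, x j = a j + 1) : f x = (r : ZMod 2) + b := by
  rw [h.2.2.2 x]
  congr 1
  exact nestVal_ones r 0 h.1 (fun s _ => layerMon_one _ x (fun j' _ => hx j'))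

lemma non_canal (h : IsLayeredForm f L a b) (i : ℕ) (hir : i < r) (j : Fin n)
    (hj : i ≤ (L j : ℕ)) (α : ZMod 2) (hne : ¬((L j : ℕ) = i ∧ α = a j)) :
    ∃ x₁ x₂ : Fin n → ZMod 2,
      (∀ j', (L j' : ℕ) < i → x₁ j' = a j' + 1) ∧
      (∀ j', (L j' : ℕ) < i → x₂ j' = a j' + 1) ∧
      x₁ j = α ∧ x₂ j = α ∧ f x₁ ≠ f x₂ := by
  rcases eq_or_ne α (a j + 1) with hα | hα
  · -- α = a j + 1 : compare all-ones with a hit on the last layer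
    have hcard : 1 < (Finset.univ.filter (fun j' : Fin n => (L j' : ℕ) = r - 1)).card := h.2.2.1
    obtain ⟨j₂, hj₂mem, hj₂ne⟩ := Finset.exists_mem_ne hcard j
    have hj₂ : (L j₂ : ℕ) = r - 1 := by simpa using hj₂mem
    refine ⟨fun j' => a j' + 1, fun j' => if j' = j₂ then a j' else a j' + 1,
      fun j' _ => rfl, fun j' hj' => ?_, hα.symm ▸ rfl, ?_, ?_⟩
    · dsimp only; rw [if_neg]; rintro rfl; omega
    · dsimp only; rw [if_neg (Ne.symm hj₂ne), hα]
    · have e1 : f (fun j' => a j' + 1) = (r : ZMod 2) + b := eval_ones h _ (fun _ => rfl)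
      have e2 : f (fun j' => if j' = j₂ then a j' else a j' + 1) = ((r - 1 : ℕ) : ZMod 2) + b := by
        refine eval_hit h (r-1) (by omega) _ (fun j' hj' => ?_) ⟨j₂, hj₂, if_pos rfl⟩
        rw [if_neg]; rintro rfl; omega
      rw [e1, e2]
      have : ((r : ℕ) : ZMod 2) = ((r - 1 : ℕ) : ZMod 2) + 1 := by
        conv_lhs => rw [show r = (r - 1) + 1 by omega]
        push_cast; ring
      rw [this]
      exact zmod2_ne_of _ _
  · -- α = a j, and the layer of j is strictly above i
    have hαa : α = a j := zmod2_eq_of_ne hα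
    have hi' : i < (L j : ℕ) := lt_of_le_of_ne hj (fun e => hne ⟨e.symm, hαa⟩)
    set i' := (L j : ℕ) with hi'def
    have hlay : 1 ≤ layerSize L (i' - 1) := h.2.1 ⟨i' - 1, by omega⟩
    obtain ⟨j₁, hj₁mem⟩ := Finset.card_pos.mp hlay
    have hj₁ : (L j₁ : ℕ) = i' - 1 := by simpa using hj₁mem
    have hj₁ne : j₁ ≠ j := by intro e; rw [e] at hj₁; omega
    refine ⟨fun j' => if j' = j then a j' else a j' + 1,
      fun j' => if j' = j ∨ j' = j₁ then a j' else a j' + 1,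
      fun j' hj' => ?_, fun j' hj' => ?_, by dsimp only; rw [if_pos rfl, hαa], ?_, ?_⟩
    · dsimp only; rw [if_neg]; rintro rfl; omega
    · dsimp only; rw [if_neg]; rintro (rfl | rfl) <;> omega
    · dsimp only; rw [if_pos (Or.inl rfl), hαa]
    · have e1 : f (fun j' => if j' = j then a j' else a j' + 1) = ((i' : ℕ) : ZMod 2) + b := by
        refine eval_hit h i' (L j).isLt _ (fun j' hj' => ?_) ⟨j, rfl, if_pos rfl⟩
        rw [if_neg]; rintro rfl; omega
      have e2 : f (fun j' => if j' = j ∨ j' = j₁ then a j' else a j' + 1)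
          = ((i' - 1 : ℕ) : ZMod 2) + b := by
        refine eval_hit h (i' - 1) (by omega) _ (fun j' hj' => ?_)
          ⟨j₁, hj₁, if_pos (Or.inr rfl)⟩
        rw [if_neg]; rintro (rfl | rfl) <;> omega
      rw [e1, e2]
      have : ((i' : ℕ) : ZMod 2) = ((i' - 1 : ℕ) : ZMod 2) + 1 := by
        conv_lhs => rw [show i' = (i' - 1) + 1 by omega]
        push_cast; ring
      rw [this]
      exact zmod2_ne_of _ _

end eval

section unique

variable {n r r' : ℕ} {f : (Fin n → ZMod 2) → ZMod 2} {L : Fin n → Fin r}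
  {L' : Fin n → Fin r'} {a a' : Fin n → ZMod 2} {b b' : ZMod 2}

lemma layered_step (h : IsLayeredForm f L a b) (h' : IsLayeredForm f L' a' b') (i : ℕ)
    (IH1 : ∀ j, (L j : ℕ) < i ↔ (L' j : ℕ) < i)
    (IH2 : ∀ j, (L j : ℕ) < i → a j = a' j)
    (j : Fin n) (hj : (L j : ℕ) = i) : (L' j : ℕ) = i ∧ a j = a' j := by
  have hir : i < r := hj ▸ (L j).isLt
  have hjr' : i ≤ (L' j : ℕ) := by
    by_contra hc
    push_neg at hc
    have := (IH1 j).mpr hc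
    omega
  by_contra hcon
  obtain ⟨x₁, x₂, hC1, hC2, hx1, hx2, hne⟩ :=
    non_canal h' i (lt_of_le_of_lt hjr' (L' j).isLt) j hjr' (a j) hcon
  have hC1' : ∀ j', (L j' : ℕ) < i → x₁ j' = a j' + 1 := fun j' hj' => by
    rw [IH2 j' hj']; exact hC1 j' ((IH1 j').1 hj')
  have hC2' : ∀ j', (L j' : ℕ) < i → x₂ j' = a j' + 1 := fun j' hj' => by
    rw [IH2 j' hj']; exact hC2 j' ((IH1 j').1 hj')
  exact hne ((eval_hit h i hir x₁ hC1' ⟨j, hj, hx1⟩).trans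
    (eval_hit h i hir x₂ hC2' ⟨j, hj, hx2⟩).symm)

theorem layered_unique (h : IsLayeredForm f L a b) (h' : IsLayeredForm f L' a' b') :
    r = r' ∧ (∀ j, (L j : ℕ) = (L' j : ℕ)) ∧ a = a' ∧ b = b' := by
  have key : ∀ i : ℕ,
      (∀ j, (L j : ℕ) < i → ((L j : ℕ) = (L' j : ℕ) ∧ a j = a' j)) ∧
      (∀ j, (L' j : ℕ) < i → ((L j : ℕ) = (L' j : ℕ) ∧ a j = a' j)) := by
    intro i
    induction i with
    | zero => exact ⟨fun j hj => by omega, fun j hj => by omega⟩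
    | succ i ih =>
      have IH1 : ∀ j, (L j : ℕ) < i ↔ (L' j : ℕ) < i := fun j =>
        ⟨fun hh => (ih.1 j hh).1 ▸ hh, fun hh => by have := (ih.2 j hh).1; omega⟩
      have IH2 : ∀ j, (L j : ℕ) < i → a j = a' j := fun j hh => (ih.1 j hh).2
      have IH1' : ∀ j, (L' j : ℕ) < i ↔ (L j : ℕ) < i := fun j => (IH1 j).symm
      have IH2' : ∀ j, (L' j : ℕ) < i → a' j = a j := fun j hh => ((ih.2 j hh).2).symm
      constructor
      · intro j hj
        rcases Nat.lt_or_ge (L j : ℕ) i with hlt | hge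
        · exact ih.1 j hlt
        · have hje : (L j : ℕ) = i := by omega
          obtain ⟨h1, h2⟩ := layered_step h h' i IH1 IH2 j hje
          exact ⟨by omega, h2⟩
      · intro j hj
        rcases Nat.lt_or_ge (L' j : ℕ) i with hlt | hge
        · exact ih.2 j hlt
        · have hje : (L' j : ℕ) = i := by omega
          obtain ⟨h1, h2⟩ := layered_step h' h i IH1' IH2' j hje
          exact ⟨by omega, h2.symm⟩
  have hLL' : ∀ j, (L j : ℕ) = (L' j : ℕ) ∧ a j = a' j := fun j =>
    (key (max r r')).1 j (lt_of_lt_of_le (L j).isLt (le_max_left _ _))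
  have haa' : a = a' := funext fun j => (hLL' j).2
  have hrr' : r = r' := by
    have h2 : 1 ≤ layerSize L (r - 1) := le_trans (by omega) h.2.2.1
    obtain ⟨j₁, hj₁mem⟩ := Finset.card_pos.mp h2
    have hj₁ : (L j₁ : ℕ) = r - 1 := by simpa using hj₁mem
    have h2' : 1 ≤ layerSize L' (r' - 1) := le_trans (by omega) h'.2.2.1
    obtain ⟨j₂, hj₂mem⟩ := Finset.card_pos.mp h2'
    have hj₂ : (L' j₂ : ℕ) = r' - 1 := by simpa using hj₂mem
    have e1 := (hLL' j₁).1
    have e2 := (hLL' j₂).1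
    have i1 := (L' j₁).isLt
    have i2 := (L j₂).isLt
    have hr1 := h.1
    have hr2 := h'.1
    omega
  have hbb' : b = b' := by
    obtain ⟨j₀, hj₀mem⟩ := Finset.card_pos.mp (h.2.1 ⟨0, h.1⟩)
    have hj₀ : (L j₀ : ℕ) = 0 := by simpa using hj₀mem
    have hj₀' : (L' j₀ : ℕ) = 0 := by rw [← (hLL' j₀).1]; exact hj₀
    have e1 : f a = ((0 : ℕ) : ZMod 2) + b :=
      eval_hit h 0 (by omega) a (fun j' hj' => by omega) ⟨j₀, hj₀, rfl⟩
    have e2 : f a = ((0 : ℕ) : ZMod 2) + b' := by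
      rw [haa']
      exact eval_hit h' 0 (by omega) a' (fun j' hj' => by omega) ⟨j₀, hj₀', rfl⟩
    rw [e1] at e2
    simpa using e2
  exact ⟨hrr', fun j => (hLL' j).1, haa', hbb'⟩

end unique
-- fiber of a sigma type over its first component
def sigmaFstFiberEquiv {r : ℕ} (k : Fin r → ℕ) (i : Fin r) :
    {p : Σ i' : Fin r, Fin (k i') // p.1 = i} ≃ Fin (k i) where
  toFun p := Fin.cast (congrArg k p.2) p.1.2
  invFun x := ⟨⟨i, x⟩, rfl⟩
  left_inv p := by
    obtain ⟨⟨i', x⟩, h⟩ := p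
    subst h
    rfl
  right_inv x := rfl

lemma exists_L0 {n r : ℕ} (k : Fin r → ℕ) (hk : ∑ i, k i = n) :
    ∃ L₀ : Fin n → Fin r, ∀ i, Fintype.card {j // L₀ j = i} = k i := by
  have hc : Fintype.card (Σ i : Fin r, Fin (k i)) = Fintype.card (Fin n) := by
    simp [Fintype.card_sigma, hk]
  let E : (Σ i : Fin r, Fin (k i)) ≃ Fin n := Fintype.equivOfCardEq hc
  refine ⟨fun j => (E.symm j).1, fun i => ?_⟩
  have e1 : {j : Fin n // (E.symm j).1 = i} ≃ {p : Σ i' : Fin r, Fin (k i') // p.1 = i} :=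
    Equiv.subtypeEquiv E.symm (fun _ => Iff.rfl)
  rw [Fintype.card_congr (e1.trans (sigmaFstFiberEquiv k i))]
  simp

lemma exists_perm {n r : ℕ} (L L' : Fin n → Fin r)
    (h : ∀ i, Fintype.card {j // L' j = i} = Fintype.card {j // L j = i}) :
    ∃ σ : Equiv.Perm (Fin n), L ∘ ⇑σ = L' := by
  let e : ∀ i, {j // L' j = i} ≃ {j // L j = i} := fun i => Fintype.equivOfCardEq (h i)
  refine ⟨((Equiv.sigmaFiberEquiv L').symm.trans
    ((Equiv.sigmaCongrRight e).trans (Equiv.sigmaFiberEquiv L))), funext fun j => ?_⟩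
  exact (e (L' j) ⟨j, rfl⟩).2

lemma card_fibers {n r : ℕ} (k : Fin r → ℕ) (hk : ∑ i, k i = n) :
    (Finset.univ.filter
        (fun L : Fin n → Fin r => ∀ i : Fin r, layerSize L (i : ℕ) = k i)).card =
      Nat.multinomial Finset.univ k := by
  classical
  have hsize : ∀ (L : Fin n → Fin r) (i : Fin r),
      layerSize L (i : ℕ) = Fintype.card {j // L j = i} := by
    intro L i
    rw [layerSize, Fintype.card_subtype]
    congr 1
    apply Finset.filter_congr
    intro j _
    exact Fin.val_eq_val (L j) i
  obtain ⟨L₀, hL₀⟩ := exists_L0 k hk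
  set S := Finset.univ.filter
    (fun L : Fin n → Fin r => ∀ i : Fin r, layerSize L (i : ℕ) = k i) with hS
  have hmem : ∀ L : Fin n → Fin r, L ∈ S ↔ ∀ i, Fintype.card {j // L j = i} = k i := by
    intro L
    simp only [hS, Finset.mem_filter, Finset.mem_univ, true_and]
    constructor
    · intro h i; rw [← hsize]; exact h i
    · intro h i; rw [hsize]; exact h i
  have hcount : (Finset.univ : Finset (Equiv.Perm (Fin n))).card =
      ∑ L' ∈ S, (Finset.univ.filter (fun σ : Equiv.Perm (Fin n) => L₀ ∘ ⇑σ = L')).card := by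
    refine Finset.card_eq_sum_card_fiberwise (fun σ _ => (hmem _).2 (fun i => ?_))
    rw [← hL₀ i]
    exact Fintype.card_congr
      (Equiv.subtypeEquiv σ (fun j => Iff.rfl) : {j // (L₀ ∘ ⇑σ) j = i} ≃ {j // L₀ j = i})
  have hterm : ∀ L' ∈ S,
      (Finset.univ.filter (fun σ : Equiv.Perm (Fin n) => L₀ ∘ ⇑σ = L')).card =
        ∏ i, (k i).factorial := by
    intro L' hL'
    obtain ⟨σ₀, hσ₀⟩ := exists_perm L₀ L' (fun i => by rw [(hmem L').1 hL' i, hL₀ i])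
    have key : ∀ σ : Equiv.Perm (Fin n), L₀ ∘ ⇑σ = L' ↔ L₀ ∘ ⇑(σ * σ₀⁻¹) = L₀ := by
      intro σ
      constructor
      · intro h
        funext j
        have h1 : L₀ (σ (σ₀⁻¹ j)) = L' (σ₀⁻¹ j) := congrFun h (σ₀⁻¹ j)
        have h2 : L' (σ₀⁻¹ j) = L₀ (σ₀ (σ₀⁻¹ j)) := (congrFun hσ₀ (σ₀⁻¹ j)).symm
        have h3 : L₀ (σ₀ (σ₀⁻¹ j)) = L₀ j := congrArg L₀ (σ₀.apply_symm_apply j)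
        simpa using h1.trans (h2.trans h3)
      · intro h
        funext j
        have h1 : L₀ (σ (σ₀⁻¹ (σ₀ j))) = L₀ (σ₀ j) := congrFun h (σ₀ j)
        simpa using h1.trans (congrFun hσ₀ j)
    calc (Finset.univ.filter (fun σ : Equiv.Perm (Fin n) => L₀ ∘ ⇑σ = L')).card
        = Fintype.card {σ : Equiv.Perm (Fin n) // L₀ ∘ ⇑σ = L'} :=
          (Fintype.card_subtype _).symm
      _ = Fintype.card {g : Equiv.Perm (Fin n) // L₀ ∘ ⇑g = L₀} := by
          refine Fintype.card_congr (Equiv.subtypeEquiv (Equiv.mulRight σ₀⁻¹) ?_)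
          intro σ
          exact key σ
      _ = ∏ i, (Fintype.card {j // L₀ j = i}).factorial := DomMulAct.stabilizer_card L₀
      _ = ∏ i, (k i).factorial := by
          refine Finset.prod_congr rfl (fun i _ => by rw [hL₀ i])
  have htot : n.factorial = S.card * ∏ i, (k i).factorial := by
    have h1 : (Finset.univ : Finset (Equiv.Perm (Fin n))).card = n.factorial := by
      rw [Finset.card_univ, Fintype.card_perm, Fintype.card_fin]
    rw [← h1, hcount, Finset.sum_congr rfl hterm, Finset.sum_const, smul_eq_mul]
  have hspec := Nat.multinomial_spec Finset.univ k
  rw [hk] at hspec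
  have hpos : 0 < ∏ i, (k i).factorial := Finset.prod_pos (fun i _ => Nat.factorial_pos _)
  refine Nat.eq_of_mul_eq_mul_right hpos ?_
  rw [← htot, ← hspec, mul_comm]
section assembly

variable {n : ℕ}

def LCond {n r : ℕ} (L : Fin n → Fin r) : Prop :=
  (∀ i : Fin r, 1 ≤ layerSize L (i : ℕ)) ∧ 2 ≤ layerSize L (r - 1)

instance {n r : ℕ} : DecidablePred (LCond (n := n) (r := r)) := fun L => by
  unfold LCond; infer_instance

def Pm (n : ℕ) :=
  Σ s : Fin (n - 1), {q : (Fin n → Fin ((s : ℕ) + 1)) × ((Fin n → ZMod 2) × ZMod 2) // LCond q.1}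

instance {n : ℕ} : Fintype (Pm n) := by unfold Pm; infer_instance

def NCFSub (n : ℕ) := {f : (Fin n → ZMod 2) → ZMod 2 //
    ∃ (r : ℕ) (L : Fin n → Fin r) (a : Fin n → ZMod 2) (b : ZMod 2), IsLayeredForm f L a b}

def Psi {n : ℕ} : Pm n → NCFSub n :=
  fun p =>
    ⟨fun x => nestVal (fun i => layerMon p.2.1.1 p.2.1.2.1 i x) ((p.1 : ℕ) + 1) 0 + p.2.1.2.2,
     ⟨(p.1 : ℕ) + 1, p.2.1.1, p.2.1.2.1, p.2.1.2.2,
      ⟨Nat.succ_le_succ (Nat.zero_le _), p.2.2.1, p.2.2.2, fun x => rfl⟩⟩⟩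

lemma Psi_inj : Function.Injective (Psi (n := n)) := by
  rintro ⟨s, ⟨⟨L, a, b⟩, hc⟩⟩ ⟨s', ⟨⟨L', a', b'⟩, hc'⟩⟩ h
  have hf := congrArg Subtype.val h
  have h1 : IsLayeredForm (fun x => nestVal (fun i => layerMon L a i x) ((s : ℕ) + 1) 0 + b)
      L a b := ⟨Nat.succ_le_succ (Nat.zero_le _), hc.1, hc.2, fun x => rfl⟩
  have h2 : IsLayeredForm (fun x => nestVal (fun i => layerMon L a i x) ((s : ℕ) + 1) 0 + b)
      L' a' b' := by
    rw [show (fun x => nestVal (fun i => layerMon L a i x) ((s : ℕ) + 1) 0 + b)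
        = (fun x => nestVal (fun i => layerMon L' a' i x) ((s' : ℕ) + 1) 0 + b') from hf]
    exact ⟨Nat.succ_le_succ (Nat.zero_le _), hc'.1, hc'.2, fun x => rfl⟩
  obtain ⟨hr, hL, ha, hb⟩ := layered_unique h1 h2
  obtain rfl : s = s' := Fin.ext (by omega)
  have hL' : L = L' := funext fun j => Fin.val_injective (hL j)
  exact congrArg (fun q => (⟨s, q⟩ : Pm n)) (Subtype.ext (by subst hL' ha hb; rfl))

lemma sum_layerSize {n r : ℕ} (L : Fin n → Fin r) :
    ∑ i ∈ Finset.range r, layerSize L i = n := by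
  have h0 : (Finset.univ : Finset (Fin n)).card =
      ∑ i ∈ Finset.range r, (Finset.univ.filter (fun j : Fin n => (L j : ℕ) = i)).card :=
    Finset.card_eq_sum_card_fiberwise (fun j _ => Finset.mem_range.mpr (L j).isLt)
  simpa [layerSize, Finset.card_univ] using h0.symm

lemma Psi_surj : Function.Surjective (Psi (n := n)) := by
  rintro ⟨f, r, L, a, b, hL⟩
  obtain ⟨m, rfl⟩ : ∃ m, r = m + 1 := ⟨r - 1, by have := hL.1; omega⟩
  have hsum := sum_layerSize L
  have hm2 : m + 2 ≤ n := by
    have hlast : 2 ≤ layerSize L m := by simpa using hL.2.2.1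
    have hge : m ≤ ∑ i ∈ Finset.range m, layerSize L i := by
      calc m = ∑ _i ∈ Finset.range m, 1 := by simp
        _ ≤ _ := Finset.sum_le_sum (fun i hi => hL.2.1 ⟨i, by
            have := Finset.mem_range.mp hi; omega⟩)
    have hss := Finset.sum_range_succ (fun i => layerSize L i) m
    omega
  refine ⟨⟨⟨m, by omega⟩, ⟨(L, (a, b)), ⟨hL.2.1, hL.2.2.1⟩⟩⟩, ?_⟩
  exact Subtype.ext (funext fun x => (hL.2.2.2 x).symm)

lemma card_LCond {n r : ℕ} (hr : 1 ≤ r) :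
    Fintype.card {L : Fin n → Fin r // LCond L} =
      ∑ k ∈ (Finset.Nat.antidiagonalTuple r n).filter
          (fun k => (∀ i, 1 ≤ k i) ∧ ∀ i : Fin r, (i : ℕ) = r - 1 → 2 ≤ k i),
        Nat.multinomial Finset.univ k := by
  classical
  rw [Fintype.card_subtype]
  rw [Finset.card_eq_sum_card_fiberwise
    (f := fun L : Fin n → Fin r => fun i : Fin r => layerSize L (i : ℕ))
    (t := (Finset.Nat.antidiagonalTuple r n).filter
          (fun k => (∀ i, 1 ≤ k i) ∧ ∀ i : Fin r, (i : ℕ) = r - 1 → 2 ≤ k i))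
    (fun L hLmem => by
      have hLC : LCond L := (Finset.mem_filter.mp hLmem).2
      refine Finset.mem_filter.mpr ⟨Finset.Nat.mem_antidiagonalTuple.mpr ?_, ?_, ?_⟩
      · rw [Fin.sum_univ_eq_sum_range (fun i => layerSize L i) r]
        exact sum_layerSize L
      · exact hLC.1
      · intro i hi
        show 2 ≤ layerSize L (i : ℕ)
        rw [hi]
        exact hLC.2)]
  refine Finset.sum_congr rfl (fun k hk => ?_)
  obtain ⟨hk0, hk1, hk2⟩ := Finset.mem_filter.mp hk
  have hkn : ∑ i, k i = n := Finset.Nat.mem_antidiagonalTuple.mp hk0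
  have hfe : ((Finset.univ.filter (fun L : Fin n → Fin r => LCond L)).filter
      (fun L => (fun i : Fin r => layerSize L (i : ℕ)) = k)) =
      Finset.univ.filter (fun L : Fin n → Fin r => ∀ i : Fin r, layerSize L (i : ℕ) = k i) := by
    ext L
    simp only [Finset.mem_filter, Finset.mem_univ, true_and, funext_iff]
    constructor
    · rintro ⟨_, h⟩; exact h
    · intro h
      refine ⟨⟨fun i => ?_, ?_⟩, h⟩
      · rw [h i]; exact hk1 i
      · have := h ⟨r - 1, by omega⟩
        rw [this]
        exact hk2 ⟨r - 1, by omega⟩ rfl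
  rw [hfe, card_fibers k hkn]

/-- The total number of nested canalizing functions in `n` essential
variables (n ≥ 2) is `2^{n+1} · Σ_{r=1}^{n−1} Σ n!/(k₁!⋯k_r!)`, the inner sum
being over all tuples of positive integers `(k₁,…,k_r)` with
`k₁ + ⋯ + k_r = n` and `k_r ≥ 2`. -/
theorem statement9 (n : ℕ) (hn : 2 ≤ n) :
    Nat.card {f : (Fin n → ZMod 2) → ZMod 2 //
        ∃ (r : ℕ) (L : Fin n → Fin r) (a : Fin n → ZMod 2) (b : ZMod 2),
          IsLayeredForm f L a b} =
      2 ^ (n + 1) *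
        ∑ r ∈ Finset.Icc 1 (n - 1),
          ∑ k ∈ (Finset.Nat.antidiagonalTuple r n).filter
              (fun k => (∀ i, 1 ≤ k i) ∧ ∀ i : Fin r, (i : ℕ) = r - 1 → 2 ≤ k i),
            Nat.multinomial Finset.univ k := by
  classical
  set g : ℕ → ℕ := fun r =>
    ∑ k ∈ (Finset.Nat.antidiagonalTuple r n).filter
        (fun k => (∀ i, 1 ≤ k i) ∧ ∀ i : Fin r, (i : ℕ) = r - 1 → 2 ≤ k i),
      Nat.multinomial Finset.univ k with hg
  have h1 : Nat.card (NCFSub n) = Nat.card (Pm n) :=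
    (Nat.card_congr (Equiv.ofBijective Psi ⟨Psi_inj, Psi_surj⟩)).symm
  have h2 : Nat.card (Pm n) = ∑ s : Fin (n - 1), g ((s : ℕ) + 1) * 2 ^ (n + 1) := by
    rw [Nat.card_eq_fintype_card]
    rw [show Fintype.card (Pm n) = ∑ s : Fin (n - 1), Fintype.card
      {q : (Fin n → Fin ((s : ℕ) + 1)) × ((Fin n → ZMod 2) × ZMod 2) // LCond q.1}
      from Fintype.card_sigma]
    refine Finset.sum_congr rfl (fun s _ => ?_)
    rw [Fintype.card_congr (Equiv.prodSubtypeFstEquivSubtypeProd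
      (p := fun L : Fin n → Fin ((s : ℕ) + 1) => LCond L))]
    rw [Fintype.card_prod, card_LCond (Nat.succ_le_succ (Nat.zero_le _))]
    congr 1
    rw [Fintype.card_prod, Fintype.card_fun, ZMod.card, Fintype.card_fin, pow_succ]
  have h3 : ∑ s : Fin (n - 1), g ((s : ℕ) + 1) * 2 ^ (n + 1) =
      2 ^ (n + 1) * ∑ r ∈ Finset.Icc 1 (n - 1), g r := by
    rw [← Finset.sum_mul, mul_comm]
    congr 1
    rw [Fin.sum_univ_eq_sum_range (fun i => g (i + 1)) (n - 1)]
    rw [show Finset.Icc 1 (n - 1) = Finset.Ico 1 n from by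
      rw [← Finset.Ico_add_one_right_eq_Icc]; congr 1; omega]
    rw [Finset.sum_Ico_eq_sum_range]
    refine Finset.sum_congr (by congr 1) (fun i _ => by rw [Nat.add_comm])
  exact (h1.trans h2).trans h3
end assembly
end

section
/- Let n ≥ 2 and let f_r : 𝔽₂ⁿ → 𝔽₂ be defined by f₁ = M₁ and, for r ≥ 2, f_r = M₁(M₂(⋯(M_{r−1}(M_r ⊕ 1) ⊕ 1)⋯) ⊕ 1), where each M_i is an extended monomial in k_i variables, the variable sets of the M_i are pairwise disjoint and together comprise all n variables, k_i ≥ 1 for i = 1,…,r−1, k_r ≥ 2, and k₁ + ⋯ + k_r = n. Then the Hamming weight of f_r is W(f_r) = Σ_{j=1}^{r} (−1)^{j−1} · 2^{n − (k₁+⋯+k_j)}. -/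
lemma zmod2_cases : ∀ v : ZMod 2, v = 0 ∨ v = 1 := by decide

lemma indicator_nest (M : ℕ → ZMod 2) :
    ∀ t, 1 ≤ t → ∀ i,
    (if nestVal M t i = 1 then (1:ℤ) else 0) =
      ∑ j ∈ Finset.range t, (-1:ℤ)^j * (if ∀ m ≤ j, M (i+m) = 1 then 1 else 0) := by
  intro t
  induction t using Nat.strong_induction_on with
  | _ t ih =>
    match t with
    | 0 => intro h; omega
    | 1 =>
      intro _ i
      simp only [nestVal, Finset.sum_range_one, pow_zero, one_mul]
      congr 1
      apply propext
      constructor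
      · intro h m hm; interval_cases m; simpa using h
      · intro h; have := h 0 (Nat.le_refl 0); simpa using this
    | (t+2) =>
      intro _ i
      rcases zmod2_cases (M i) with h0 | h1
      · rw [show nestVal M (t+2) i = 0 from by simp [nestVal, h0]]
        rw [if_neg (by decide)]
        symm
        apply Finset.sum_eq_zero
        intro j hj
        rw [if_neg, mul_zero]
        intro hall
        have := hall 0 (Nat.zero_le _)
        rw [Nat.add_zero] at this
        rw [h0] at this
        exact absurd this (by decide)
      · have hnest : nestVal M (t+2) i = nestVal M (t+1) (i+1) + 1 := by
          simp [nestVal, h1]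
        rw [hnest]
        rw [Finset.sum_range_succ']
        have hP0 : ∀ m ≤ 0, M (i+m) = 1 := by
          intro m hm; interval_cases m; simpa using h1
        have hshift : ∀ j, (∀ m ≤ j + 1, M (i+m) = 1) ↔ (∀ m ≤ j, M (i+1+m) = 1) := by
          intro j
          constructor
          · intro h m hm
            have := h (m+1) (by omega)
            rwa [show i + (m+1) = i+1+m by omega] at this
          · intro h m hm
            match m with
            | 0 => simpa using h1
            | (m'+1) =>
              have := h m' (by omega)
              rwa [show i + (m'+1) = i+1+m' by omega]
        have hrw : ∀ j ∈ Finset.range (t+1),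
            (-1:ℤ)^(j+1) * (if ∀ m ≤ j + 1, M (i+m) = 1 then 1 else 0)
              = -((-1:ℤ)^j * (if ∀ m ≤ j, M (i+1+m) = 1 then 1 else 0)) := by
          intro j _
          rw [pow_succ]
          rcases em (∀ m ≤ j, M (i+1+m) = 1) with hc | hc
          · rw [if_pos ((hshift j).mpr hc), if_pos hc]; ring
          · rw [if_neg (fun hh => hc ((hshift j).mp hh)), if_neg hc]; ring
        rw [Finset.sum_congr rfl hrw, Finset.sum_neg_distrib]
        rw [← ih (t+1) (by omega) (by omega) (i+1)]
        simp only [pow_zero, one_mul, if_pos hP0]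
        rcases zmod2_cases (nestVal M (t+1) (i+1)) with hv | hv <;> rw [hv] <;> decide

lemma prod_eq_one_iff' {α : Type*} (s : Finset α) (f : α → ZMod 2) :
    ∏ i ∈ s, f i = 1 ↔ ∀ i ∈ s, f i = 1 := by
  classical
  induction s using Finset.induction with
  | empty => simp
  | insert _ _ hx ih =>
    rw [Finset.prod_insert hx]
    have key : ∀ u v : ZMod 2, u * v = 1 ↔ u = 1 ∧ v = 1 := by decide
    rw [key]
    simp [ih]

lemma prefix_iff {n r : ℕ} (L : Fin n → Fin r) (a : Fin n → ZMod 2) (j : ℕ)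
    (x : Fin n → ZMod 2) :
    (∀ m ≤ j, layerMon L a m x = 1) ↔ ∀ i : Fin n, (L i : ℕ) ≤ j → x i = a i + 1 := by
  have key : ∀ u v : ZMod 2, u + v = 1 ↔ u = v + 1 := by decide
  constructor
  · intro h i hi
    have := h (L i) hi
    rw [layerMon, prod_eq_one_iff'] at this
    have := this i (by simp)
    exact (key _ _).mp this
  · intro h m hm
    rw [layerMon, prod_eq_one_iff']
    intro i hi
    simp only [Finset.mem_filter, Finset.mem_univ, true_and] at hi
    exact (key _ _).mpr (h i (hi ▸ hm))

lemma card_fixed {n : ℕ} (p : Fin n → Prop) [DecidablePred p] (g : Fin n → ZMod 2) :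
    (Finset.univ.filter (fun x : Fin n → ZMod 2 => ∀ i, p i → x i = g i)).card
      = 2 ^ (n - (Finset.univ.filter p).card) := by
  classical
  have e : {x : Fin n → ZMod 2 // ∀ i, p i → x i = g i} ≃ ({i : Fin n // ¬ p i} → ZMod 2) :=
    { toFun := fun x i => x.1 i.1
      invFun := fun y => ⟨fun i => if h : p i then g i else y ⟨i, h⟩, fun i hi => by simp [hi]⟩
      left_inv := fun x => by
        ext i; by_cases h : p i
        · simp [h, x.2 i h]
        · simp [h]
      right_inv := fun y => by ext i; simp [i.2] }
  have h1 : (Finset.univ.filter (fun x : Fin n → ZMod 2 => ∀ i, p i → x i = g i)).card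
      = Fintype.card {x : Fin n → ZMod 2 // ∀ i, p i → x i = g i} := by
    rw [Fintype.card_subtype]
  rw [h1, Fintype.card_congr e, Fintype.card_fun]
  have h2 : Fintype.card {i : Fin n // ¬ p i} = (Finset.univ.filter (fun i => ¬ p i)).card := by
    rw [Fintype.card_subtype]
  have h3 := Finset.card_filter_add_card_filter_not (s := (Finset.univ : Finset (Fin n))) (p := p)
  simp only [Finset.card_univ, Fintype.card_fin] at h3
  have : Fintype.card (ZMod 2) = 2 := by decide
  rw [h2, this]
  rw [Nat.eq_sub_of_add_eq' h3]

lemma card_le_eq_layerSum {n r : ℕ} (L : Fin n → Fin r) (j : ℕ) :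
    (Finset.univ.filter (fun i : Fin n => (L i : ℕ) ≤ j)).card = layerSum L (j+1) := by
  classical
  rw [layerSum]
  rw [Finset.card_eq_sum_card_fiberwise (f := fun i : Fin n => (L i : ℕ))
    (t := Finset.range (j+1)) (fun i hi => by
      simp only [Finset.coe_filter, Set.mem_setOf_eq] at hi
      simp [Finset.mem_range]; omega)]
  apply Finset.sum_congr rfl
  intro m hm
  simp only [Finset.mem_range] at hm
  rw [layerSize, Finset.filter_filter]
  congr 1
  ext i
  simp only [Finset.mem_filter, Finset.mem_univ, true_and]
  constructor
  · rintro ⟨_, h⟩; exact h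
  · intro h; exact ⟨by omega, h⟩

/-- The Hamming weight of `f_r = M₁(M₂(⋯(M_{r−1}(M_r ⊕ 1) ⊕ 1)⋯) ⊕ 1)`
(the layered form with constant `b = 0`) is
`W(f_r) = Σ_{j=1}^{r} (−1)^{j−1} · 2^{n − (k₁+⋯+k_j)}`. -/
theorem statement11 {n r : ℕ} (hn : 2 ≤ n) (f : (Fin n → ZMod 2) → ZMod 2)
    (L : Fin n → Fin r) (a : Fin n → ZMod 2)
    (h : IsLayeredForm f L a 0) :
    ((Finset.univ.filter (fun x : Fin n → ZMod 2 => f x = 1)).card : ℤ) =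
      ∑ j ∈ Finset.range r, (-1 : ℤ) ^ j * 2 ^ (n - layerSum L (j + 1)) := by
  classical
  obtain ⟨hr, -, -, hf⟩ := h
  rw [← Finset.sum_boole]
  have hstep : ∀ x : Fin n → ZMod 2, (if f x = 1 then (1:ℤ) else 0)
      = ∑ j ∈ Finset.range r, (-1:ℤ)^j *
          (if ∀ m ≤ j, layerMon L a m x = 1 then 1 else 0) := by
    intro x
    have hind := indicator_nest (fun i => layerMon L a i x) r hr 0
    simp only [Nat.zero_add] at hind
    simp only [hf x, add_zero]
    exact hind
  rw [Finset.sum_congr rfl (fun x _ => hstep x), Finset.sum_comm]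
  apply Finset.sum_congr rfl
  intro j _
  rw [← Finset.mul_sum]
  congr 1
  rw [Finset.sum_boole]
  have hfe : (Finset.univ.filter (fun x : Fin n → ZMod 2 => ∀ m ≤ j, layerMon L a m x = 1))
      = Finset.univ.filter
          (fun x : Fin n → ZMod 2 => ∀ i : Fin n, (L i : ℕ) ≤ j → x i = a i + 1) := by
    apply Finset.filter_congr
    intro x _
    exact prefix_iff L a j x
  rw [hfe, card_fixed (fun i : Fin n => (L i : ℕ) ≤ j) (fun i => a i + 1),
    card_le_eq_layerSum]
  push_cast
  ring
end

section
/- Let n ≥ 2 and let f_r : 𝔽₂ⁿ → 𝔽₂ be defined by f₁ = M₁ and, for r ≥ 2, f_r = M₁(M₂(⋯(M_{r−1}(M_r ⊕ 1) ⊕ 1)⋯) ⊕ 1), where each M_i is an extended monomial in k_i variables, the variable sets of the M_i are pairwise disjoint and together comprise all n variables, k_i ≥ 1 for i = 1,…,r−1, k_r ≥ 2, and k₁ + ⋯ + k_r = n. Then the Hamming weight of f_r ⊕ 1 is W(f_r ⊕ 1) = Σ_{j=0}^{r} (−1)^{j} · 2^{n − (k₁+⋯+k_j)}, where the empty sum k₁+⋯+k_j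 for j = 0 is interpreted as 0 (so the j = 0 term is 2ⁿ). -/
section AuxWeight

open Finset

lemma zmod2_ne_zero_iff (u : ZMod 2) : u ≠ 0 ↔ u = 1 := by revert u; decide

lemma zmod2_eq_zero_iff_not (u : ZMod 2) : u = 0 ↔ ¬ u = 1 := by revert u; decide

lemma zmod2_eq_one_iff_not (u : ZMod 2) : u = 1 ↔ ¬ u = 0 := by revert u; decide

lemma prod_zmod2_eq_one_iff {α : Type*} (s : Finset α) (g : α → ZMod 2) :
    ∏ j ∈ s, g j = 1 ↔ ∀ j ∈ s, g j = 1 := by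
  rw [← zmod2_ne_zero_iff, Finset.prod_ne_zero_iff]
  simp only [zmod2_ne_zero_iff]

lemma card_cyl {n : ℕ} (p : Fin n → Prop) [DecidablePred p] (c : Fin n → ZMod 2) :
    (Finset.univ.filter (fun x : Fin n → ZMod 2 => ∀ j, p j → x j = c j)).card
      = 2 ^ (Finset.univ.filter (fun j => ¬ p j)).card := by
  have h : Finset.univ.filter (fun x : Fin n → ZMod 2 => ∀ j, p j → x j = c j)
      = Fintype.piFinset (fun j => if p j then {c j} else Finset.univ) := by
    ext x
    simp only [mem_filter, Fintype.mem_piFinset, mem_univ, true_and]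
    constructor
    · intro h j; split <;> simp_all
    · intro h j hj; have := h j; rw [if_pos hj] at this; simpa using this
  rw [h, Fintype.card_piFinset]
  have h2 : ∀ j : Fin n, (if p j then ({c j} : Finset (ZMod 2)) else Finset.univ).card
      = if p j then 1 else 2 := by
    intro j; split <;> simp [Finset.card_univ]
  simp only [h2]
  rw [Finset.prod_ite]
  simp

lemma layerMon_eq_one_iff {n r : ℕ} (L : Fin n → Fin r) (a : Fin n → ZMod 2) (i : ℕ)
    (x : Fin n → ZMod 2) :
    layerMon L a i x = 1 ↔ ∀ j, (L j : ℕ) = i → x j = a j + 1 := by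
  rw [layerMon, prod_zmod2_eq_one_iff]
  have h : ∀ u v : ZMod 2, u + v = 1 ↔ u = v + 1 := by decide
  simp [h]

lemma card_lt_filter {n r : ℕ} (L : Fin n → Fin r) (l : ℕ) :
    (Finset.univ.filter (fun j : Fin n => (L j : ℕ) < l)).card = layerSum L l := by
  induction l with
  | zero => simp [layerSum]
  | succ l ih =>
    have h : Finset.univ.filter (fun j : Fin n => (L j : ℕ) < l + 1)
        = Finset.univ.filter (fun j : Fin n => (L j : ℕ) < l)
          ∪ Finset.univ.filter (fun j : Fin n => (L j : ℕ) = l) := by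
      ext j; simp only [mem_filter, mem_union, mem_univ, true_and]; omega
    rw [h, Finset.card_union_of_disjoint ?_, ih]
    · rw [layerSum, layerSum, Finset.sum_range_succ, layerSize]
    · rw [Finset.disjoint_filter]
      intro j _ hj; omega

lemma layerSum_le {n r : ℕ} (L : Fin n → Fin r) (l : ℕ) : layerSum L l ≤ n := by
  rw [← card_lt_filter]
  simpa using Finset.card_filter_le (Finset.univ : Finset (Fin n)) (fun j => (L j : ℕ) < l)

lemma card_not_lt_filter {n r : ℕ} (L : Fin n → Fin r) (l : ℕ) :
    (Finset.univ.filter (fun j : Fin n => ¬ (L j : ℕ) < l)).card = n - layerSum L l := by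
  have h := Finset.card_filter_add_card_filter_not (s := (Finset.univ : Finset (Fin n)))
    (p := fun j : Fin n => (L j : ℕ) < l)
  rw [card_lt_filter] at h
  simp only [Finset.card_univ, Fintype.card_fin] at h
  omega

lemma card_prefix {n r : ℕ} (L : Fin n → Fin r) (a : Fin n → ZMod 2) (l : ℕ) :
    (Finset.univ.filter (fun x : Fin n → ZMod 2 =>
        ∀ j, (L j : ℕ) < l → x j = a j + 1)).card = 2 ^ (n - layerSum L l) := by
  rw [card_cyl (fun j => (L j : ℕ) < l) (fun j => a j + 1), card_not_lt_filter]

lemma card_split {α : Type*} [Fintype α] (p q : α → Prop)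
    [DecidablePred p] [DecidablePred q] :
    (Finset.univ.filter fun x => p x ∧ q x).card
      + (Finset.univ.filter fun x => p x ∧ ¬ q x).card
      = (Finset.univ.filter p).card := by
  have h := Finset.card_filter_add_card_filter_not
    (s := Finset.univ.filter p) (p := q)
  rw [Finset.filter_filter, Finset.filter_filter] at h
  exact h

lemma prefix_succ_iff {n r : ℕ} (L : Fin n → Fin r) (a : Fin n → ZMod 2) (l : ℕ)
    (x : Fin n → ZMod 2) :
    ((∀ j, (L j : ℕ) < l → x j = a j + 1) ∧ layerMon L a l x = 1)
      ↔ (∀ j, (L j : ℕ) < l + 1 → x j = a j + 1) := by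
  rw [layerMon_eq_one_iff]
  constructor
  · rintro ⟨h1, h2⟩ j hj
    rcases Nat.lt_succ_iff_lt_or_eq.mp hj with h | h
    · exact h1 j h
    · exact h2 j h
  · intro h
    exact ⟨fun j hj => h j (by omega), fun j hj => h j (by omega)⟩

lemma key_count {n r : ℕ} (L : Fin n → Fin r) (a : Fin n → ZMod 2) :
    ∀ t l, 1 ≤ t → l + t = r →
    ((Finset.univ.filter (fun x : Fin n → ZMod 2 =>
        (∀ j, (L j : ℕ) < l → x j = a j + 1) ∧
        nestVal (fun i => layerMon L a i x) t l = 0)).card : ℤ)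
      = ∑ j ∈ Finset.Icc l r, (-1 : ℤ) ^ (j - l) * 2 ^ (n - layerSum L j) := by
  intro t
  induction t with
  | zero => intro l h1 h2; omega
  | succ t ih =>
    intro l _ hlr
    cases t with
    | zero =>
      -- base case: t = 1, l + 1 = r
      -- all arithmetic facts first (omega cannot handle later card hypotheses)
      have h1 : l - l = 0 := by omega
      have h2 : l + 1 - l = 1 := by omega
      have hicc : Finset.Icc l r = {l, l + 1} := by
        ext j; simp only [Finset.mem_Icc, Finset.mem_insert, Finset.mem_singleton]; omega
      have hne : l ∉ ({l + 1} : Finset ℕ) := by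
        simp only [Finset.mem_singleton]; omega
      have hB : (Finset.univ.filter (fun x : Fin n → ZMod 2 =>
          (∀ j, (L j : ℕ) < l → x j = a j + 1) ∧ layerMon L a l x = 1)).card
          = 2 ^ (n - layerSum L (l + 1)) := by
        rw [Finset.filter_congr (fun x _ => prefix_succ_iff L a l x), card_prefix]
      have hsplit := card_split (fun x : Fin n → ZMod 2 =>
          ∀ j, (L j : ℕ) < l → x j = a j + 1)
        (fun x => layerMon L a l x = 1)
      rw [hB, card_prefix] at hsplit
      have hgoal : Finset.univ.filter (fun x : Fin n → ZMod 2 =>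
          (∀ j, (L j : ℕ) < l → x j = a j + 1) ∧
          nestVal (fun i => layerMon L a i x) 1 l = 0)
          = Finset.univ.filter (fun x : Fin n → ZMod 2 =>
          (∀ j, (L j : ℕ) < l → x j = a j + 1) ∧ ¬ layerMon L a l x = 1) := by
        apply Finset.filter_congr
        intro x _
        have hn1 : nestVal (fun i => layerMon L a i x) 1 l = layerMon L a l x := rfl
        rw [hn1, zmod2_eq_zero_iff_not]
      rw [hgoal, hicc, Finset.sum_insert hne, Finset.sum_singleton, h1, h2]
      have hs := congrArg (Nat.cast (R := ℤ)) hsplit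
      push_cast at hs ⊢
      linarith
    | succ s =>
      -- step case: t = s + 2
      -- arithmetic facts first
      have hll : l - l = 0 := by omega
      have hicc : Finset.Icc l r = insert l (Finset.Icc (l + 1) r) := by
        ext j; simp only [Finset.mem_Icc, Finset.mem_insert]; omega
      have hnotmem : l ∉ Finset.Icc (l + 1) r := by
        simp only [Finset.mem_Icc]; omega
      have hjl : ∀ j, l + 1 ≤ j → j - l = (j - (l + 1)) + 1 := by
        intro j hj; omega
      have hIH := ih (l + 1) (Nat.succ_le_succ (Nat.zero_le s)) (by omega)
      set g : (Fin n → ZMod 2) → ZMod 2 :=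
        fun x => nestVal (fun i => layerMon L a i x) (s + 1) (l + 1) with hg
      set B := (Finset.univ.filter (fun x : Fin n → ZMod 2 =>
          (∀ j, (L j : ℕ) < l → x j = a j + 1) ∧ layerMon L a l x = 1)).card with hBdef
      set C := (Finset.univ.filter (fun x : Fin n → ZMod 2 =>
          (∀ j, (L j : ℕ) < l → x j = a j + 1) ∧ ¬ layerMon L a l x = 1)).card with hCdef
      set E := (Finset.univ.filter (fun x : Fin n → ZMod 2 =>
          (∀ j, (L j : ℕ) < l + 1 → x j = a j + 1) ∧ g x = 0)).card with hEdef
      set D := (Finset.univ.filter (fun x : Fin n → ZMod 2 =>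
          (∀ j, (L j : ℕ) < l + 1 → x j = a j + 1) ∧ ¬ g x = 0)).card with hDdef
      have hBC : B + C = 2 ^ (n - layerSum L l) := by
        rw [hBdef, hCdef, card_split, card_prefix]
      have hB : B = 2 ^ (n - layerSum L (l + 1)) := by
        rw [hBdef, Finset.filter_congr (fun x _ => prefix_succ_iff L a l x), card_prefix]
      have hED : E + D = 2 ^ (n - layerSum L (l + 1)) := by
        rw [hEdef, hDdef, card_split, card_prefix]
      have hE : (E : ℤ) = ∑ j ∈ Finset.Icc (l + 1) r,
          (-1 : ℤ) ^ (j - (l + 1)) * 2 ^ (n - layerSum L j) := hIH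
      have hmul : ∀ u v : ZMod 2, (u * (v + 1) = 0) ↔ (¬ u = 1 ∨ ¬ v = 0) := by decide
      have hgoal : Finset.univ.filter (fun x : Fin n → ZMod 2 =>
          (∀ j, (L j : ℕ) < l → x j = a j + 1) ∧
          nestVal (fun i => layerMon L a i x) (s + 1 + 1) l = 0)
          = (Finset.univ.filter (fun x : Fin n → ZMod 2 =>
              (∀ j, (L j : ℕ) < l → x j = a j + 1) ∧ ¬ layerMon L a l x = 1))
            ∪ (Finset.univ.filter (fun x : Fin n → ZMod 2 =>
              (∀ j, (L j : ℕ) < l + 1 → x j = a j + 1) ∧ ¬ g x = 0)) := by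
        rw [← Finset.filter_or]
        apply Finset.filter_congr
        intro x _
        have hnest : nestVal (fun i => layerMon L a i x) (s + 1 + 1) l
            = layerMon L a l x * (g x + 1) := rfl
        rw [hnest, hmul]
        constructor
        · rintro ⟨h1, h2 | h2⟩
          · exact Or.inl ⟨h1, h2⟩
          · by_cases hM : layerMon L a l x = 1
            · exact Or.inr ⟨(prefix_succ_iff L a l x).mp ⟨h1, hM⟩, h2⟩
            · exact Or.inl ⟨h1, hM⟩
        · rintro (⟨h1, h2⟩ | ⟨h1, h2⟩)
          · exact ⟨h1, Or.inl h2⟩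
          · obtain ⟨h3, _⟩ := (prefix_succ_iff L a l x).mpr h1
            exact ⟨h3, Or.inr h2⟩
      have hdisj : Disjoint
          (Finset.univ.filter (fun x : Fin n → ZMod 2 =>
              (∀ j, (L j : ℕ) < l → x j = a j + 1) ∧ ¬ layerMon L a l x = 1))
          (Finset.univ.filter (fun x : Fin n → ZMod 2 =>
              (∀ j, (L j : ℕ) < l + 1 → x j = a j + 1) ∧ ¬ g x = 0)) := by
        rw [Finset.disjoint_filter]
        rintro x _ ⟨_, hM⟩ ⟨h1, _⟩
        exact hM ((prefix_succ_iff L a l x).mpr h1).2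
      rw [hgoal, Finset.card_union_of_disjoint hdisj, ← hCdef, ← hDdef]
      rw [hicc, Finset.sum_insert hnotmem]
      have hsum : ∑ j ∈ Finset.Icc (l + 1) r, (-1 : ℤ) ^ (j - l) * 2 ^ (n - layerSum L j)
          = -∑ j ∈ Finset.Icc (l + 1) r,
              (-1 : ℤ) ^ (j - (l + 1)) * 2 ^ (n - layerSum L j) := by
        rw [← Finset.sum_neg_distrib]
        apply Finset.sum_congr rfl
        intro j hj
        rw [hjl j (Finset.mem_Icc.mp hj).1, pow_succ]
        ring
      rw [hsum, hll]
      have hBC' := congrArg (Nat.cast (R := ℤ)) hBC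
      have hED' := congrArg (Nat.cast (R := ℤ)) hED
      have hB' := congrArg (Nat.cast (R := ℤ)) hB
      push_cast at hBC' hED' hB' ⊢
      linarith [hE]

end AuxWeight

/-- The Hamming weight of `f_r ⊕ 1`, where
`f_r = M₁(M₂(⋯(M_{r−1}(M_r ⊕ 1) ⊕ 1)⋯) ⊕ 1)` (the layered form with constant
`b = 0`), is `W(f_r ⊕ 1) = Σ_{j=0}^{r} (−1)^{j} · 2^{n − (k₁+⋯+k_j)}`, the
`j = 0` term being `2^n`. -/
theorem statement12 {n r : ℕ} (hn : 2 ≤ n) (f : (Fin n → ZMod 2) → ZMod 2)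
    (L : Fin n → Fin r) (a : Fin n → ZMod 2)
    (h : IsLayeredForm f L a 0) :
    ((Finset.univ.filter (fun x : Fin n → ZMod 2 => f x + 1 = 1)).card : ℤ) =
      ∑ j ∈ Finset.range (r + 1), (-1 : ℤ) ^ j * 2 ^ (n - layerSum L j) := by
  obtain ⟨hr, _, _, hf⟩ := h
  have hrange : Finset.range (r + 1) = Finset.Icc 0 r := by
    ext j; simp only [Finset.mem_range, Finset.mem_Icc]; omega
  have hkey := key_count L a r 0 hr (Nat.zero_add r)
  have hgoal : Finset.univ.filter (fun x : Fin n → ZMod 2 => f x + 1 = 1)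
      = Finset.univ.filter (fun x : Fin n → ZMod 2 =>
          (∀ j, (L j : ℕ) < 0 → x j = a j + 1) ∧
          nestVal (fun i => layerMon L a i x) r 0 = 0) := by
    apply Finset.filter_congr
    intro x _
    have h01 : ∀ u : ZMod 2, u + 1 = 1 ↔ u = 0 := by decide
    rw [hf x, add_zero, h01]
    simp
  rw [hgoal, hkey, ← hrange]
  exact Finset.sum_congr rfl (fun j _ => by rw [Nat.sub_zero])
end
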